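/- arXiv:1203.3831 — 6 statements merged into one kernel-verified Lean document; each statement's English description precedes it below -/
import Mathlib

section
/- Let σ be a 2n×2n real symmetric positive definite matrix and let Ω̃ be any 2n×2n real matrix that is both antisymmetric (Ω̃ᵀ = -Ω̃) and orthogonal (Ω̃ᵀΩ̃ = 𝟙). Then the smallest eigenvalue of the matrix σ^{1/2} Ω̃ᵀ σ Ω̃ σ^{1/2} is bounded from below by λ₁↑·λ₂↑, the product of the two smallest eigenvalues of σ. (In particular, for Ω̃ = TΩT the partially transposed symplectic form, this says the smallest partially transposed symplectic eigenvalue ν̃₋ of σ satisfies ν̃₋² ≥ λ₁↑λ₂↑.) -/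
open Matrix
open scoped ComplexOrder

open Classical in
/-- The eigenvalues of a matrix in increasing order (junk value `0` if not Hermitian). -/
noncomputable def eigUp {d : ℕ} (M : Matrix (Fin d) (Fin d) ℝ) : Fin d → ℝ :=
  if h : M.IsHermitian then h.eigenvalues ∘ Tuple.sort h.eigenvalues else 0

/-- The eigenvalues of a matrix in decreasing order. -/
noncomputable def eigDown {d : ℕ} (M : Matrix (Fin d) (Fin d) ℝ) (j : Fin d) : ℝ :=
  eigUp M j.rev

/-- The standard symplectic form on `2n` canonical variables: block diagonal with
blocks `[[0,1],[-1,0]]`. -/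
def Omega (n : ℕ) : Matrix (Fin (2*n)) (Fin (2*n)) ℝ :=
  Matrix.of fun i j =>
    if (i : ℕ) + 1 = (j : ℕ) ∧ (i : ℕ) % 2 = 0 then 1
    else if (j : ℕ) + 1 = (i : ℕ) ∧ (j : ℕ) % 2 = 0 then -1 else 0

/-- Partial transposition matrix `T = 𝟙₂^{⊕ l} ⊕ σz^{⊕ (n-l)}` for the bipartition of the
first `l` versus the last `n - l` modes. -/
def Tmat (n l : ℕ) : Matrix (Fin (2*n)) (Fin (2*n)) ℝ :=
  Matrix.diagonal fun i => if (i : ℕ) / 2 < l ∨ (i : ℕ) % 2 = 0 then 1 else -1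

/-- The partially transposed symplectic form `Ω̃ = T Ω T`. -/
def OmegaPT (n l : ℕ) : Matrix (Fin (2*n)) (Fin (2*n)) ℝ :=
  Tmat n l * Omega n * Tmat n l

open Classical in
/-- The positive square root of a positive semidefinite matrix (junk value `0` otherwise). -/
noncomputable def msqrt {d : ℕ} (M : Matrix (Fin d) (Fin d) ℝ) : Matrix (Fin d) (Fin d) ℝ :=
  if h : M.PosSemidef then
    h.1.eigenvectorUnitary.1 * diagonal ((↑) ∘ (√·) ∘ h.1.eigenvalues) *
      (star h.1.eigenvectorUnitary : Matrix (Fin d) (Fin d) ℝ)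
  else 0

/-- `σ + iΩ ≥ 0`: the Robertson–Schrödinger condition for a real symmetric matrix `σ`
to be a bona fide covariance matrix. -/
def IsCM (n : ℕ) (σ : Matrix (Fin (2*n)) (Fin (2*n)) ℝ) : Prop :=
  σ.IsSymm ∧
    (σ.map (Complex.ofReal ·) + Complex.I • (Omega n).map (Complex.ofReal ·)).PosSemidef

/-- `ν̃₋²`, the square of the smallest partially transposed symplectic eigenvalue of `σ`, for
the bipartition of the first `l` versus the remaining modes: the smallest eigenvalue of
`σ^{1/2} Ω̃ᵀ σ Ω̃ σ^{1/2}`. -/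
noncomputable def nuSq (n l : ℕ) (σ : Matrix (Fin (2*n)) (Fin (2*n)) ℝ) : ℝ :=
  sInf (spectrum ℝ (msqrt σ * (OmegaPT n l)ᵀ * σ * OmegaPT n l * msqrt σ))

/-- `ν̃₋`, the smallest partially transposed symplectic eigenvalue of `σ`. -/
noncomputable def nuMin (n l : ℕ) (σ : Matrix (Fin (2*n)) (Fin (2*n)) ℝ) : ℝ :=
  Real.sqrt (nuSq n l σ)

/-- The logarithmic negativity `E_N(σ) = max (0, −log₂ ν̃₋)`. -/
noncomputable def logNeg (n l : ℕ) (σ : Matrix (Fin (2*n)) (Fin (2*n)) ℝ) : ℝ :=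
  max 0 (-(Real.logb 2 (nuMin n l σ)))

noncomputable def Matrix.PosSemidef.sqrt {d : ℕ} {M : Matrix (Fin d) (Fin d) ℝ}
    (h : M.PosSemidef) : Matrix (Fin d) (Fin d) ℝ :=
  h.1.eigenvectorUnitary.1 * diagonal ((↑) ∘ (√·) ∘ h.1.eigenvalues) *
    (star h.1.eigenvectorUnitary : Matrix (Fin d) (Fin d) ℝ)

lemma Matrix.PosSemidef.posSemidef_sqrt {d : ℕ} {M : Matrix (Fin d) (Fin d) ℝ}
    (h : M.PosSemidef) : h.sqrt.PosSemidef := by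
  unfold Matrix.PosSemidef.sqrt
  have hd : (diagonal ((↑) ∘ (√·) ∘ h.1.eigenvalues) : Matrix (Fin d) (Fin d) ℝ).PosSemidef :=
    Matrix.posSemidef_diagonal_iff.mpr fun i => by simp [Real.sqrt_nonneg]
  have := hd.mul_mul_conjTranspose_same (h.1.eigenvectorUnitary.1)
  simpa [Matrix.star_eq_conjTranspose] using this

lemma dp_shift {d : ℕ} (M : Matrix (Fin d) (Fin d) ℝ) (v w : Fin d → ℝ) :
    (Mᵀ *ᵥ v) ⬝ᵥ w = v ⬝ᵥ (M *ᵥ w) := by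
  rw [Matrix.mulVec_transpose, ← Matrix.dotProduct_mulVec]

lemma dp_unitary {d : ℕ} (U : Matrix (Fin d) (Fin d) ℝ) (hU : U * Uᵀ = 1) (a b : Fin d → ℝ) :
    (Uᵀ *ᵥ a) ⬝ᵥ (Uᵀ *ᵥ b) = a ⬝ᵥ b := by
  rw [dp_shift, Matrix.mulVec_mulVec, hU, Matrix.one_mulVec]

lemma core_ineq {d : ℕ} (D : Fin d → ℝ) (hD : ∀ i, 0 < D i) (i0 : Fin d)
    (l1 l2 : ℝ) (hl1 : 0 < l1) (h12 : l1 ≤ l2) (hi0 : l1 ≤ D i0)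
    (hrest : ∀ i, i ≠ i0 → l2 ≤ D i)
    (u v : Fin d → ℝ)
    (hnorm : ∑ i, u i ^ 2 = ∑ i, v i ^ 2)
    (horth : ∑ i, u i * v i = 0) :
    l1 * l2 * ∑ i, v i ^ 2 / D i ≤ ∑ i, D i * u i ^ 2 := by
  have hl2 : 0 < l2 := hl1.trans_le h12
  set r2 := ∑ i, v i ^ 2 with hr2
  have hr2nonneg : 0 ≤ r2 := Finset.sum_nonneg fun i _ => sq_nonneg _
  -- split sums at i0
  have husplit : u i0 ^ 2 + ∑ i ∈ Finset.univ.erase i0, u i ^ 2 = ∑ i, u i ^ 2 :=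
    Finset.add_sum_erase _ (fun i => u i ^ 2) (Finset.mem_univ i0)
  have hvsplit : v i0 ^ 2 + ∑ i ∈ Finset.univ.erase i0, v i ^ 2 = r2 :=
    Finset.add_sum_erase _ (fun i => v i ^ 2) (Finset.mem_univ i0)
  -- (a)
  have ha : l1 * u i0 ^ 2 + l2 * (r2 - u i0 ^ 2) ≤ ∑ i, D i * u i ^ 2 := by
    have hsplit : D i0 * u i0 ^ 2 + ∑ i ∈ Finset.univ.erase i0, D i * u i ^ 2
        = ∑ i, D i * u i ^ 2 := Finset.add_sum_erase _ (fun i => D i * u i ^ 2) (Finset.mem_univ i0)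
    have h1 : l1 * u i0 ^ 2 ≤ D i0 * u i0 ^ 2 :=
      mul_le_mul_of_nonneg_right hi0 (sq_nonneg _)
    have h2 : l2 * (r2 - u i0 ^ 2) ≤ ∑ i ∈ Finset.univ.erase i0, D i * u i ^ 2 := by
      have : ∑ i ∈ Finset.univ.erase i0, l2 * u i ^ 2
          ≤ ∑ i ∈ Finset.univ.erase i0, D i * u i ^ 2 := by
        refine Finset.sum_le_sum fun i hi => ?_
        exact mul_le_mul_of_nonneg_right (hrest i (Finset.ne_of_mem_erase hi)) (sq_nonneg _)
      have he : ∑ i ∈ Finset.univ.erase i0, u i ^ 2 = r2 - u i0 ^ 2 := by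
        have := husplit.trans hnorm
        linarith
      calc l2 * (r2 - u i0 ^ 2) = ∑ i ∈ Finset.univ.erase i0, l2 * u i ^ 2 := by
            rw [← Finset.mul_sum, he]
        _ ≤ _ := this
    linarith
  -- (b)
  have hb : ∑ i, v i ^ 2 / D i ≤ v i0 ^ 2 / l1 + (r2 - v i0 ^ 2) / l2 := by
    have hsplit : v i0 ^ 2 / D i0 + ∑ i ∈ Finset.univ.erase i0, v i ^ 2 / D i
        = ∑ i, v i ^ 2 / D i := Finset.add_sum_erase _ (fun i => v i ^ 2 / D i) (Finset.mem_univ i0)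
    have h1 : v i0 ^ 2 / D i0 ≤ v i0 ^ 2 / l1 := by
      gcongr
    have h2 : ∑ i ∈ Finset.univ.erase i0, v i ^ 2 / D i ≤ (r2 - v i0 ^ 2) / l2 := by
      have he : ∑ i ∈ Finset.univ.erase i0, v i ^ 2 = r2 - v i0 ^ 2 := by linarith
      calc ∑ i ∈ Finset.univ.erase i0, v i ^ 2 / D i
          ≤ ∑ i ∈ Finset.univ.erase i0, v i ^ 2 / l2 := by
            refine Finset.sum_le_sum fun i hi => ?_
            gcongr
            exact hrest i (Finset.ne_of_mem_erase hi)
        _ = (r2 - v i0 ^ 2) / l2 := by rw [← Finset.sum_div, he]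
    linarith
  -- (c)
  have hc : u i0 ^ 2 + v i0 ^ 2 ≤ r2 := by
    have hp : ∑ i, (u i0 * u i + v i0 * v i) ^ 2 = (u i0 ^ 2 + v i0 ^ 2) * r2 := by
      have hterm : ∀ i, (u i0 * u i + v i0 * v i) ^ 2
          = u i0 ^ 2 * u i ^ 2 + v i0 ^ 2 * v i ^ 2 + (2 * (u i0 * v i0)) * (u i * v i) := by
        intro i; ring
      calc ∑ i, (u i0 * u i + v i0 * v i) ^ 2
          = ∑ i, (u i0 ^ 2 * u i ^ 2 + v i0 ^ 2 * v i ^ 2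
              + (2 * (u i0 * v i0)) * (u i * v i)) := by
            exact Finset.sum_congr rfl fun i _ => hterm i
        _ = u i0 ^ 2 * (∑ i, u i ^ 2) + v i0 ^ 2 * (∑ i, v i ^ 2)
              + (2 * (u i0 * v i0)) * (∑ i, u i * v i) := by
            simp [Finset.sum_add_distrib, Finset.mul_sum]
        _ = (u i0 ^ 2 + v i0 ^ 2) * r2 := by rw [hnorm, horth]; ring
    have hsingle : (u i0 * u i0 + v i0 * v i0) ^ 2 ≤ ∑ i, (u i0 * u i + v i0 * v i) ^ 2 :=
      Finset.single_le_sum (f := fun i => (u i0 * u i + v i0 * v i) ^ 2)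
        (fun i _ => sq_nonneg _) (Finset.mem_univ i0)
    rw [hp] at hsingle
    nlinarith [sq_nonneg (u i0), sq_nonneg (v i0)]
  -- combine
  have hb' : l1 * l2 * (∑ i, v i ^ 2 / D i) ≤ l2 * v i0 ^ 2 + l1 * (r2 - v i0 ^ 2) := by
    calc l1 * l2 * (∑ i, v i ^ 2 / D i)
        ≤ l1 * l2 * (v i0 ^ 2 / l1 + (r2 - v i0 ^ 2) / l2) := by
          exact mul_le_mul_of_nonneg_left hb (by positivity)
      _ = l2 * v i0 ^ 2 + l1 * (r2 - v i0 ^ 2) := by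
          field_simp
    done
  have hmid : l2 * v i0 ^ 2 + l1 * (r2 - v i0 ^ 2) ≤ l1 * u i0 ^ 2 + l2 * (r2 - u i0 ^ 2) := by
    nlinarith [mul_le_mul_of_nonneg_left hc (sub_nonneg.mpr h12)]
  linarith

lemma quad_bound {d : ℕ} (σ Omt : Matrix (Fin d) (Fin d) ℝ)
    (hps : σ.PosSemidef) (hanti : Omtᵀ = -Omt) (horth : Omtᵀ * Omt = 1)
    (i0 : Fin d) (l1 l2 : ℝ) (hl1 : 0 < l1) (h12 : l1 ≤ l2)
    (hD : ∀ i, 0 < hps.1.eigenvalues i)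
    (hi0 : l1 ≤ hps.1.eigenvalues i0)
    (hrest : ∀ i, i ≠ i0 → l2 ≤ hps.1.eigenvalues i) (x : Fin d → ℝ) :
    l1 * l2 * (x ⬝ᵥ x) ≤ x ⬝ᵥ ((hps.sqrt * Omtᵀ * σ * Omt * hps.sqrt) *ᵥ x) := by
  have hherm := hps.1
  set D := hps.1.eigenvalues with hDdef
  set U : Matrix (Fin d) (Fin d) ℝ := (hps.1.eigenvectorUnitary : Matrix (Fin d) (Fin d) ℝ)
    with hUdef
  have hstar : star U = Uᵀ := by
    rw [Matrix.star_eq_conjTranspose, Matrix.conjTranspose_eq_transpose_of_trivial]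
  have hU : U * Uᵀ = 1 := by
    rw [← hstar]; exact Matrix.mem_unitaryGroup_iff.mp hps.1.eigenvectorUnitary.2
  have hU' : Uᵀ * U = 1 := by
    rw [← hstar]; exact Matrix.mem_unitaryGroup_iff'.mp hps.1.eigenvectorUnitary.2
  have hspec : σ = U * Matrix.diagonal D * Uᵀ := by
    have h := hps.1.spectral_theorem
    rw [Unitary.conjStarAlgAut_apply] at h
    rwa [hstar] at h
  have hsq : hps.sqrt = U * Matrix.diagonal (fun i => Real.sqrt (D i)) * Uᵀ := by
    rw [Matrix.PosSemidef.sqrt, hstar]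
    congr 1
  have hSsymm : (hps.sqrt)ᵀ = hps.sqrt := by
    have h := hps.posSemidef_sqrt.1
    rwa [Matrix.IsHermitian, Matrix.conjTranspose_eq_transpose_of_trivial] at h
  set S := hps.sqrt with hSdef
  set y := S *ᵥ x with hy
  set z := Omt *ᵥ y with hz
  set u := Uᵀ *ᵥ z with hu
  set w := Uᵀ *ᵥ x with hw
  set v := Uᵀ *ᵥ y with hv
  -- quadratic form equals z ⬝ᵥ (σ *ᵥ z)
  have hQA : x ⬝ᵥ ((S * Omtᵀ * σ * Omt * S) *ᵥ x) = z ⬝ᵥ (σ *ᵥ z) := by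
    simp only [← Matrix.mulVec_mulVec]
    rw [← hy, ← dp_shift S x, hSsymm, ← hy, ← hz, ← dp_shift Omtᵀ y,
      Matrix.transpose_transpose, ← hz]
  -- diagonalize
  have hdiag : ∀ a : Fin d → ℝ, a ⬝ᵥ (Matrix.diagonal D *ᵥ a) = ∑ i, D i * a i ^ 2 := by
    intro a
    calc a ⬝ᵥ (Matrix.diagonal D *ᵥ a) = ∑ i, a i * (D i * a i) := by
          simp [dotProduct, Matrix.mulVec_diagonal]
      _ = ∑ i, D i * a i ^ 2 := Finset.sum_congr rfl fun i _ => by ring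
  have hzσz : z ⬝ᵥ (σ *ᵥ z) = ∑ i, D i * u i ^ 2 := by
    rw [hspec]
    simp only [← Matrix.mulVec_mulVec]
    rw [← dp_shift U z, ← hu]
    exact hdiag u
  have hsumsq : ∀ a : Fin d → ℝ, a ⬝ᵥ a = ∑ i, a i ^ 2 := by
    intro a; simp [dotProduct, sq]
  have hzz : z ⬝ᵥ z = y ⬝ᵥ y := by
    calc z ⬝ᵥ z = ((Omtᵀ)ᵀ *ᵥ y) ⬝ᵥ z := by rw [Matrix.transpose_transpose]
      _ = y ⬝ᵥ (Omtᵀ *ᵥ z) := dp_shift _ _ _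
      _ = y ⬝ᵥ ((Omtᵀ * Omt) *ᵥ y) := by rw [hz, Matrix.mulVec_mulVec]
      _ = y ⬝ᵥ y := by rw [horth, Matrix.one_mulVec]
  have hzy : z ⬝ᵥ y = 0 := by
    have h1 : z ⬝ᵥ y = y ⬝ᵥ (Omtᵀ *ᵥ y) := by
      rw [← dp_shift Omtᵀ y y, Matrix.transpose_transpose, ← hz]
    rw [hanti, Matrix.neg_mulVec, dotProduct_neg, ← hz, dotProduct_comm] at h1
    rw [dotProduct_comm]
    linarith
  -- norms and orthogonality for u, v
  have huu : ∑ i, u i ^ 2 = ∑ i, v i ^ 2 := by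
    rw [← hsumsq u, ← hsumsq v, hu, hv, dp_unitary U hU, dp_unitary U hU, hzz]
  have huv : ∑ i, u i * v i = 0 := by
    have h : u ⬝ᵥ v = z ⬝ᵥ y := by rw [hu, hv, dp_unitary U hU]
    rw [hzy] at h
    simpa [dotProduct] using h
  -- v in terms of w
  have hvw : v = fun i => Real.sqrt (D i) * w i := by
    have hUS : Uᵀ * S = Matrix.diagonal (fun i => Real.sqrt (D i)) * Uᵀ := by
      rw [hsq, ← Matrix.mul_assoc, ← Matrix.mul_assoc, hU', Matrix.one_mul]
    funext i
    rw [hv, hy, Matrix.mulVec_mulVec, hUS, ← Matrix.mulVec_mulVec, ← hw,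
      Matrix.mulVec_diagonal]
  have hxx : x ⬝ᵥ x = ∑ i, w i ^ 2 := by
    rw [← hsumsq w, hw, dp_unitary U hU]
  have hsumvw : ∑ i, v i ^ 2 / D i = ∑ i, w i ^ 2 := by
    refine Finset.sum_congr rfl fun i _ => ?_
    rw [hvw]
    rw [mul_pow, Real.sq_sqrt (le_of_lt (hD i)), mul_div_cancel_left₀ _ (ne_of_gt (hD i))]
  calc l1 * l2 * (x ⬝ᵥ x) = l1 * l2 * ∑ i, v i ^ 2 / D i := by rw [hxx, hsumvw]
    _ ≤ ∑ i, D i * u i ^ 2 := core_ineq D hD i0 l1 l2 hl1 h12 hi0 hrest u v huu huv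
    _ = x ⬝ᵥ ((S * Omtᵀ * σ * Omt * S) *ᵥ x) := by rw [hQA, hzσz]

/-- **Lemma 1 (Bound on smallest symplectic eigenvalue).**
For a real symmetric positive definite `σ` and any real antisymmetric orthogonal `Ω̃`,
the smallest eigenvalue of `σ^{1/2} Ω̃ᵀ σ Ω̃ σ^{1/2}` is at least the product of the two
smallest eigenvalues of `σ`. -/
theorem smallest_pt_symplectic_eigenvalue_bound
    (n : ℕ) (hn : 0 < n) (σ Omt : Matrix (Fin (2*n)) (Fin (2*n)) ℝ)
    (hσsym : σ.IsSymm) (hσpd : σ.PosDef)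
    (hanti : Omtᵀ = -Omt) (horth : Omtᵀ * Omt = 1) :
    eigUp σ ⟨0, by omega⟩ * eigUp σ ⟨1, by omega⟩ ≤
      sInf (spectrum ℝ (msqrt σ * Omtᵀ * σ * Omt * msqrt σ)) := by
  have hps : σ.PosSemidef := hσpd.posSemidef
  have hherm : σ.IsHermitian := hps.1
  have hmsqrt : msqrt σ = hps.sqrt := dif_pos hps
  have heig : eigUp σ = hherm.eigenvalues ∘ Tuple.sort hherm.eigenvalues := by
    rw [eigUp, dif_pos hherm]
  set D := hherm.eigenvalues with hDdef
  set i0 : Fin (2*n) := Tuple.sort D ⟨0, by omega⟩ with hi0def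
  set l1 := D (Tuple.sort D ⟨0, by omega⟩) with hl1def
  set l2 := D (Tuple.sort D ⟨1, by omega⟩) with hl2def
  have hD : ∀ i, 0 < D i := hσpd.eigenvalues_pos
  have hl1 : 0 < l1 := hD _
  have hmono := Tuple.monotone_sort D
  have h12 : l1 ≤ l2 := hmono (Fin.mk_le_mk.mpr (by omega))
  have hrest : ∀ i, i ≠ i0 → l2 ≤ D i := by
    intro i hi
    have hj : i = Tuple.sort D ((Tuple.sort D).symm i) :=
      ((Tuple.sort D).apply_symm_apply i).symm
    set j := (Tuple.sort D).symm i with hjdef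
    have hj0 : j ≠ ⟨0, by omega⟩ := by
      intro h
      apply hi
      rw [hj, h, hi0def]
    have hv : (j : ℕ) ≠ 0 := fun h => hj0 (Fin.ext h)
    have h1j : (⟨1, by omega⟩ : Fin (2*n)) ≤ j := by
      rw [Fin.le_def]
      exact Nat.one_le_iff_ne_zero.mpr hv
    calc l2 ≤ D (Tuple.sort D j) := hmono h1j
      _ = D i := by rw [← hj]
  set A := msqrt σ * Omtᵀ * σ * Omt * msqrt σ with hA
  have hquad : ∀ x : Fin (2*n) → ℝ, l1 * l2 * (x ⬝ᵥ x) ≤ x ⬝ᵥ (A *ᵥ x) := by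
    intro x
    rw [hA, hmsqrt]
    exact quad_bound σ Omt hps hanti horth i0 l1 l2 hl1 h12 hD (le_refl _) hrest x
  have hS : (msqrt σ)ᵀ = msqrt σ := by
    rw [hmsqrt]
    have h := hps.posSemidef_sqrt.1
    rwa [Matrix.IsHermitian, Matrix.conjTranspose_eq_transpose_of_trivial] at h
  have hAherm : A.IsHermitian := by
    rw [Matrix.IsHermitian, Matrix.conjTranspose_eq_transpose_of_trivial, hA]
    simp only [Matrix.transpose_mul, Matrix.transpose_transpose, hS, hσsym.eq]
    simp [Matrix.mul_assoc]
  have hne : (spectrum ℝ A).Nonempty :=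
    ⟨_, hAherm.eigenvalues_mem_spectrum_real ⟨0, by omega⟩⟩
  rw [heig]
  refine le_csInf hne ?_
  intro μ hμ
  rw [spectrum.mem_iff] at hμ
  have hdet : (algebraMap ℝ (Matrix (Fin (2*n)) (Fin (2*n)) ℝ) μ - A).det = 0 := by
    by_contra h
    exact hμ ((Matrix.isUnit_iff_isUnit_det _).mpr (Ne.isUnit h))
  obtain ⟨x, hx0, hxe⟩ := (Matrix.exists_mulVec_eq_zero_iff).mpr hdet
  have hAx : A *ᵥ x = μ • x := by
    have h1 : (algebraMap ℝ (Matrix (Fin (2*n)) (Fin (2*n)) ℝ) μ) *ᵥ x - A *ᵥ x = 0 := by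
      rw [← Matrix.sub_mulVec]; exact hxe
    have h2 : (algebraMap ℝ (Matrix (Fin (2*n)) (Fin (2*n)) ℝ) μ) *ᵥ x = μ • x := by
      rw [Algebra.algebraMap_eq_smul_one, Matrix.smul_mulVec, Matrix.one_mulVec]
    rw [h2] at h1
    exact (sub_eq_zero.mp h1).symm
  have hxq : x ⬝ᵥ (A *ᵥ x) = μ * (x ⬝ᵥ x) := by
    rw [hAx, dotProduct_smul, smul_eq_mul]
  have h0 : 0 ≤ x ⬝ᵥ x := by
    simp only [dotProduct]
    exact Finset.sum_nonneg fun i _ => mul_self_nonneg _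
  have hxx : 0 < x ⬝ᵥ x :=
    h0.lt_of_ne fun h => hx0 (dotProduct_self_eq_zero.mp h.symm)
  show l1 * l2 ≤ μ
  have hfin := hquad x
  rw [hxq] at hfin
  exact le_of_mul_le_mul_right hfin hxx
end

section
/- Let σ be a 2n×2n real symmetric matrix satisfying σ + iΩ ≥ 0, and let {λ_j↑} and {λ_j↓} be its eigenvalues listed respectively in increasing and decreasing order. Then λ_j↑ · λ_j↓ ≥ 1 for every j with 1 ≤ j ≤ n. -/
open Matrix
open scoped ComplexOrder

namespace CMAux

variable {n : ℕ}

/-- partner index -/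
def pm (n : ℕ) (i : Fin (2*n)) : Fin (2*n) :=
  ⟨if (i:ℕ) % 2 = 0 then (i:ℕ)+1 else (i:ℕ)-1, by have := i.isLt; split_ifs with h <;> omega⟩

lemma pm_pm (i : Fin (2*n)) : pm n (pm n i) = i := by
  apply Fin.ext
  simp only [pm]
  have := i.isLt
  split_ifs <;> omega

lemma omega_apply_ne (i j : Fin (2*n)) (hj : j ≠ pm n i) : Omega n i j = 0 := by
  have hv : (j:ℕ) ≠ (if (i:ℕ) % 2 = 0 then (i:ℕ)+1 else (i:ℕ)-1) := by
    intro h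
    exact hj (Fin.ext (by simpa [pm] using h))
  have hlt := i.isLt
  simp only [Omega, Matrix.of_apply]
  split_ifs with h1 h2
  · exfalso; rw [if_pos h1.2] at hv; omega
  · exfalso
    have hi : (i:ℕ) % 2 = 1 := by omega
    rw [if_neg (by omega)] at hv; omega
  · rfl

lemma omega_mulVec (x : Fin (2*n) → ℝ) (i : Fin (2*n)) :
    (Omega n).mulVec x i = if (i:ℕ) % 2 = 0 then x (pm n i) else -(x (pm n i)) := by
  have h : (Omega n).mulVec x i = ∑ j, Omega n i j * x j := rfl
  rw [h, Finset.sum_eq_single (pm n i)]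
  · rcases Nat.mod_two_eq_zero_or_one (i:ℕ) with hp | hp
    · have hval : ((pm n i) : ℕ) = (i:ℕ)+1 := by simp [pm, hp]
      have : Omega n i (pm n i) = 1 := by
        simp only [Omega, Matrix.of_apply]
        rw [if_pos ⟨hval.symm, hp⟩]
      rw [this, if_pos hp, one_mul]
    · have hval : ((pm n i) : ℕ) = (i:ℕ)-1 := by simp [pm, hp]
      have hi1 : 1 ≤ (i:ℕ) := by omega
      have : Omega n i (pm n i) = -1 := by
        simp only [Omega, Matrix.of_apply]
        rw [if_neg (by omega), if_pos ⟨by omega, by omega⟩]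
      rw [this, if_neg (by omega)]
      ring
  · intro j _ hj
    rw [omega_apply_ne i j hj, zero_mul]
  · intro hmem
    exact absurd (Finset.mem_univ _) hmem

lemma pm_parity (i : Fin (2*n)) (h : (i:ℕ) % 2 = 0) : ((pm n i):ℕ) % 2 = 1 := by
  simp [pm, h]; omega

lemma pm_parity' (i : Fin (2*n)) (h : (i:ℕ) % 2 = 1) : ((pm n i):ℕ) % 2 = 0 := by
  simp [pm, h]; omega

lemma omega_omega (x : Fin (2*n) → ℝ) :
    (Omega n).mulVec ((Omega n).mulVec x) = -x := by
  funext i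
  rw [omega_mulVec, omega_mulVec x (pm n i), pm_pm]
  rcases Nat.mod_two_eq_zero_or_one (i:ℕ) with hp | hp
  · rw [if_pos hp, if_neg (by rw [pm_parity i hp]; omega)]
    simp
  · rw [if_neg (by omega), if_pos (pm_parity' i hp)]
    simp

lemma omega_norm (x : Fin (2*n) → ℝ) :
    ((Omega n).mulVec x) ⬝ᵥ ((Omega n).mulVec x) = x ⬝ᵥ x := by
  have h1 : ∀ i, ((Omega n).mulVec x i) * ((Omega n).mulVec x i) = x (pm n i) * x (pm n i) := by
    intro i; rw [omega_mulVec]; split_ifs <;> ring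
  calc ((Omega n).mulVec x) ⬝ᵥ ((Omega n).mulVec x)
      = ∑ i, x (pm n i) * x (pm n i) := Finset.sum_congr rfl (fun i _ => h1 i)
    _ = x ⬝ᵥ x := Equiv.sum_comp (Function.Involutive.toPerm (pm n) pm_pm) (fun i => x i * x i)

lemma omega_transpose : (Omega n)ᵀ = -(Omega n) := by
  ext i j
  simp only [transpose_apply, neg_apply, Omega, of_apply]
  split_ifs <;> simp only [Matrix.neg_apply, Pi.neg_apply, of_apply] <;> split_ifs <;> first | (exfalso; omega) | norm_num

lemma dot_omega_self (u : Fin (2*n) → ℝ) : u ⬝ᵥ (Omega n).mulVec u = 0 := by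
  have h1 : u ⬝ᵥ (Omega n).mulVec u = ((Omega n)ᵀ.mulVec u) ⬝ᵥ u := by
    rw [Matrix.dotProduct_mulVec, Matrix.mulVec_transpose]
  rw [omega_transpose] at h1
  have h2 : ((-(Omega n)).mulVec u) ⬝ᵥ u = -(u ⬝ᵥ (Omega n).mulVec u) := by
    rw [Matrix.neg_mulVec, neg_dotProduct, dotProduct_comm]
  rw [h2] at h1
  linarith

lemma dot_symm (M : Matrix (Fin (2*n)) (Fin (2*n)) ℝ) (hM : M.IsSymm)
    (u v : Fin (2*n) → ℝ) : u ⬝ᵥ M.mulVec v = v ⬝ᵥ M.mulVec u := by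
  rw [Matrix.dotProduct_mulVec, ← Matrix.mulVec_transpose, hM.eq, dotProduct_comm]

def cvec {d : ℕ} (u : Fin d → ℝ) : Fin d → ℂ := fun k => ((u k : ℝ) : ℂ)

lemma dot_real {d : ℕ} (M : Matrix (Fin d) (Fin d) ℝ) (u v : Fin d → ℝ) :
    cvec u ⬝ᵥ (M.map (Complex.ofReal ·)).mulVec (cvec v)
      = ((u ⬝ᵥ M.mulVec v : ℝ) : ℂ) := by
  simp only [cvec, dotProduct, Matrix.mulVec, Matrix.map_apply]
  push_cast
  rfl

lemma star_cvec {d : ℕ} (u : Fin d → ℝ) : star (cvec u) = cvec u := by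
  funext k; simp [cvec]

lemma cm_quad {σ : Matrix (Fin (2*n)) (Fin (2*n)) ℝ} (hCM : IsCM n σ)
    (u v : Fin (2*n) → ℝ) :
    0 ≤ u ⬝ᵥ σ.mulVec u + v ⬝ᵥ σ.mulVec v
        + (u ⬝ᵥ (Omega n).mulVec v - v ⬝ᵥ (Omega n).mulVec u) := by
  have h0 := hCM.2.dotProduct_mulVec_nonneg (cvec u - Complex.I • cvec v)
  have hstar : star (cvec u - Complex.I • cvec v) = cvec u + Complex.I • cvec v := by
    simp [star_sub, star_smul, star_cvec, Complex.star_def, Complex.conj_I, neg_smul,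
      sub_neg_eq_add]
  rw [hstar] at h0
  have hexp : (cvec u + Complex.I • cvec v) ⬝ᵥ
      (σ.map (Complex.ofReal ·) + Complex.I • (Omega n).map (Complex.ofReal ·)).mulVec
        (cvec u - Complex.I • cvec v)
      = ((u ⬝ᵥ σ.mulVec u + v ⬝ᵥ σ.mulVec v
          + (u ⬝ᵥ (Omega n).mulVec v - v ⬝ᵥ (Omega n).mulVec u) : ℝ) : ℂ) := by
    simp only [Matrix.add_mulVec, Matrix.smul_mulVec, Matrix.mulVec_sub,
      Matrix.mulVec_smul, dotProduct_add, dotProduct_sub, add_dotProduct, sub_dotProduct,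
      dotProduct_smul, smul_dotProduct, smul_eq_mul, smul_sub, smul_smul]
    rw [dot_real σ u u, dot_real σ u v, dot_real σ v u, dot_real σ v v,
      dot_real (Omega n) u u, dot_real (Omega n) u v, dot_real (Omega n) v u,
      dot_real (Omega n) v v]
    rw [dot_omega_self u, dot_omega_self v, dot_symm σ hCM.1 v u]
    push_cast
    ring_nf
    linear_combination (-(v ⬝ᵥ σ.mulVec v : ℝ) - (u ⬝ᵥ (Omega n).mulVec v : ℝ)
      + (v ⬝ᵥ (Omega n).mulVec u : ℝ)) * Complex.I_sq
  rw [hexp] at h0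
  exact Complex.zero_le_real.1 h0

lemma dotProduct_sum' {d k : ℕ} (v : Fin d → ℝ) (f : Fin k → (Fin d → ℝ)) :
    v ⬝ᵥ (∑ i, f i) = ∑ i, v ⬝ᵥ f i := by
  simp only [dotProduct, Finset.sum_apply, Finset.mul_sum]
  exact Finset.sum_comm

lemma sum_dotProduct' {d k : ℕ} (v : Fin d → ℝ) (f : Fin k → (Fin d → ℝ)) :
    (∑ i, f i) ⬝ᵥ v = ∑ i, f i ⬝ᵥ v := by
  simp only [dotProduct, Finset.sum_apply, Finset.sum_mul]
  exact Finset.sum_comm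

lemma ortho_li {d k : ℕ} (v : Fin k → (Fin d → ℝ))
    (h : ∀ i j, v i ⬝ᵥ v j = if i = j then 1 else 0) : LinearIndependent ℝ v := by
  rw [Fintype.linearIndependent_iff]
  intro c hc i
  have h2 := congrArg (fun y => v i ⬝ᵥ y) hc
  simp only [dotProduct_sum', dotProduct_smul, h, dotProduct_zero, smul_eq_mul,
    mul_ite, mul_one, mul_zero] at h2
  rw [Finset.sum_ite_eq _ i (fun j => c j)] at h2
  simpa using h2

lemma expand_dot {d k : ℕ} (v : Fin k → (Fin d → ℝ))
    (h : ∀ i j, v i ⬝ᵥ v j = if i = j then 1 else 0) (a b : Fin k → ℝ) :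
    (∑ i, a i • v i) ⬝ᵥ (∑ i, b i • v i) = ∑ i, a i * b i := by
  rw [sum_dotProduct']
  have hterm : ∀ i, (a i • v i) ⬝ᵥ (∑ j, b j • v j) = a i * b i := by
    intro i
    rw [smul_dotProduct, dotProduct_sum']
    simp only [dotProduct_smul, h, smul_eq_mul, mul_ite, mul_one, mul_zero]
    rw [Finset.sum_ite_eq _ i (fun j => b j)]
    simp
  exact Finset.sum_congr rfl (fun i _ => hterm i)

lemma quad_bound {d k : ℕ} (A : Matrix (Fin d) (Fin d) ℝ) (v : Fin k → (Fin d → ℝ))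
    (h : ∀ i j, v i ⬝ᵥ v j = if i = j then 1 else 0)
    (lam : Fin k → ℝ) (heig : ∀ i, A.mulVec (v i) = lam i • v i)
    (m : ℝ) (hm : ∀ i, lam i ≤ m) (c : Fin k → ℝ) :
    (∑ i, c i • v i) ⬝ᵥ A.mulVec (∑ i, c i • v i)
      ≤ m * ((∑ i, c i • v i) ⬝ᵥ (∑ i, c i • v i)) := by
  have hAx : A.mulVec (∑ i, c i • v i) = ∑ i, (c i * lam i) • v i := by
    have hmap := map_sum A.mulVecLin (fun i => c i • v i) Finset.univ
    simp only [Matrix.mulVecLin_apply] at hmap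
    rw [hmap]
    refine Finset.sum_congr rfl (fun i _ => ?_)
    rw [Matrix.mulVec_smul, heig i, smul_smul]
  rw [hAx, expand_dot v h, expand_dot v h]
  rw [Finset.mul_sum]
  refine Finset.sum_le_sum (fun i _ => ?_)
  have h1 : c i * c i ≥ 0 := mul_self_nonneg _
  nlinarith [hm i]

end CMAux

open CMAux in
/-- **Lemma 2 (Uncertainty relation for CMs' eigenvalues).**
If `σ` is a covariance matrix (`σ + iΩ ≥ 0`), then `λ_j↑ · λ_j↓ ≥ 1` for `1 ≤ j ≤ n`. -/
theorem cm_eigenvalue_uncertainty (n : ℕ) (σ : Matrix (Fin (2*n)) (Fin (2*n)) ℝ)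
    (hCM : IsCM n σ) (j : ℕ) (hj1 : 1 ≤ j) (hj2 : j ≤ n) :
    1 ≤ eigUp σ ⟨j - 1, by omega⟩ * eigDown σ ⟨j - 1, by omega⟩ := by
  classical
  have hn : 1 ≤ n := le_trans hj1 hj2
  have hd1 : j - 1 < 2*n := by omega
  have hd2 : 2*n - j < 2*n := by omega
  have h : σ.IsHermitian := by
    rw [Matrix.IsHermitian, Matrix.conjTranspose_eq_transpose_of_trivial]
    exact hCM.1
  set g := Tuple.sort h.eigenvalues with hg
  have heigUp : eigUp σ = fun i => h.eigenvalues (g i) := by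
    simp only [eigUp, dif_pos h, hg]
    rfl
  have hmono : Monotone (eigUp σ) := by
    rw [heigUp]; exact Tuple.monotone_sort h.eigenvalues
  set w : Fin (2*n) → (Fin (2*n) → ℝ) := fun i => ⇑(h.eigenvectorBasis (g i)) with hwdef
  have hw_dot : ∀ i j, w i ⬝ᵥ w j = if i = j then 1 else 0 := by
    intro i j
    have ho := h.eigenvectorBasis.orthonormal
    rw [orthonormal_iff_ite] at ho
    have h2 := ho (g i) (g j)
    simp only [PiLp.inner_apply, RCLike.inner_apply, conj_trivial,
      EmbeddingLike.apply_eq_iff_eq] at h2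
    rw [dotProduct_comm]
    exact h2
  have hw_eig : ∀ i, σ.mulVec (w i) = eigUp σ i • w i := by
    intro i
    rw [heigUp, hwdef]
    exact h.mulVec_eigenvectorBasis (g i)
  -- target eigenvalues
  set L := eigUp σ ⟨j-1, hd1⟩ with hL
  set U := eigUp σ ⟨2*n - j, hd2⟩ with hU
  have hgoal : eigDown σ ⟨j-1, hd1⟩ = U := by
    rw [eigDown, hU]
    congr 1
    apply Fin.ext
    simp [Fin.val_rev]
    omega
  -- families
  set v1 : Fin j → (Fin (2*n) → ℝ) := fun k => w ⟨(k:ℕ), by omega⟩ with hv1def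
  set v2 : Fin (2*n - j + 1) → (Fin (2*n) → ℝ) := fun k => w ⟨(k:ℕ), by omega⟩ with hv2def
  have hv1 : ∀ a b, v1 a ⬝ᵥ v1 b = if a = b then 1 else 0 := by
    intro a b
    rw [hv1def]
    simp only [hw_dot]
    simp [Fin.ext_iff]
  have hv2 : ∀ a b, v2 a ⬝ᵥ v2 b = if a = b then 1 else 0 := by
    intro a b
    rw [hv2def]
    simp only [hw_dot]
    simp [Fin.ext_iff]
  -- subspaces
  set V : Submodule ℝ (Fin (2*n) → ℝ) := Submodule.span ℝ (Set.range v1) with hVdef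
  set U2 : Submodule ℝ (Fin (2*n) → ℝ) := Submodule.span ℝ (Set.range v2) with hU2def
  have hcomp1 : ((Omega n).mulVecLin).comp (-(Omega n).mulVecLin) = LinearMap.id := by
    apply LinearMap.ext; intro x
    simp only [LinearMap.comp_apply, LinearMap.neg_apply, Matrix.mulVecLin_apply,
      LinearMap.id_apply, Matrix.mulVec_neg, omega_omega, neg_neg]
  have hcomp2 : (-(Omega n).mulVecLin).comp ((Omega n).mulVecLin) = LinearMap.id := by
    apply LinearMap.ext; intro x
    simp only [LinearMap.comp_apply, LinearMap.neg_apply, Matrix.mulVecLin_apply,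
      LinearMap.id_apply, omega_omega, neg_neg]
  set e : (Fin (2*n) → ℝ) ≃ₗ[ℝ] (Fin (2*n) → ℝ) :=
    LinearEquiv.ofLinear ((Omega n).mulVecLin) (-(Omega n).mulVecLin) hcomp1 hcomp2 with hedef
  set W : Submodule ℝ (Fin (2*n) → ℝ) := Submodule.comap (e : (Fin (2*n) → ℝ) →ₗ[ℝ] (Fin (2*n) → ℝ)) U2 with hWdef
  have hVrank : Module.finrank ℝ V = j := by
    rw [hVdef, finrank_span_eq_card (ortho_li v1 hv1), Fintype.card_fin]
  have hU2rank : Module.finrank ℝ U2 = 2*n - j + 1 := by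
    rw [hU2def, finrank_span_eq_card (ortho_li v2 hv2), Fintype.card_fin]
  have hWrank : Module.finrank ℝ W = 2*n - j + 1 := by
    rw [hWdef, Submodule.comap_equiv_eq_map_symm, LinearEquiv.finrank_map_eq]
    exact hU2rank
  have hVW : V ⊓ W ≠ ⊥ := by
    intro hbot
    have hs := Submodule.finrank_sup_add_finrank_inf_eq V W
    rw [hbot, finrank_bot] at hs
    have hle : Module.finrank ℝ ↥(V ⊔ W) ≤ 2*n := by
      have h1 := Submodule.finrank_le (V ⊔ W)
      simpa [Module.finrank_pi] using h1
    omega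
  obtain ⟨x, hxVW, hx0⟩ := Submodule.exists_mem_ne_zero_of_ne_bot hVW
  have hxV : x ∈ V := (Submodule.mem_inf.1 hxVW).1
  have hxW : (Omega n).mulVec x ∈ U2 := by
    have h2 := (Submodule.mem_inf.1 hxVW).2
    rw [hWdef, Submodule.mem_comap] at h2
    exact h2
  obtain ⟨c1, hc1⟩ := (Submodule.mem_span_range_iff_exists_fun ℝ).1 hxV
  obtain ⟨c2, hc2⟩ := (Submodule.mem_span_range_iff_exists_fun ℝ).1 hxW
  set b : Fin (2*n) → ℝ := (Omega n).mulVec x with hbdef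
  -- quadratic form bounds
  have hX : x ⬝ᵥ σ.mulVec x ≤ L * (x ⬝ᵥ x) := by
    rw [← hc1]
    refine quad_bound σ v1 hv1 (fun k => eigUp σ ⟨(k:ℕ), by omega⟩)
      (fun k => hw_eig _) L (fun k => hmono ?_) c1
    rw [Fin.le_def]
    simp only []
    omega
  have hY : b ⬝ᵥ σ.mulVec b ≤ U * (b ⬝ᵥ b) := by
    rw [← hc2]
    refine quad_bound σ v2 hv2 (fun k => eigUp σ ⟨(k:ℕ), by omega⟩)
      (fun k => hw_eig _) U (fun k => hmono ?_) c2
    rw [Fin.le_def]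
    simp only []
    omega
  have hbb : b ⬝ᵥ b = x ⬝ᵥ x := omega_norm x
  have hNnn : 0 ≤ x ⬝ᵥ x := Finset.sum_nonneg (fun i _ => mul_self_nonneg _)
  have hNne : x ⬝ᵥ x ≠ 0 := fun hh => hx0 (dotProduct_self_eq_zero.mp hh)
  have hN : 0 < x ⬝ᵥ x := lt_of_le_of_ne hNnn (Ne.symm hNne)
  set N := x ⬝ᵥ x with hNdef
  -- the scaled uncertainty inequality
  have hineq : ∀ c : ℝ, c ≠ 0 →
      2 * N ≤ c^2 * (x ⬝ᵥ σ.mulVec x) + (c⁻¹)^2 * (b ⬝ᵥ σ.mulVec b) := by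
    intro c hc
    have h0 := cm_quad hCM (c • x) (c⁻¹ • b)
    simp only [smul_dotProduct, dotProduct_smul, Matrix.mulVec_smul, smul_eq_mul] at h0
    rw [hbdef] at h0
    rw [omega_omega x, omega_norm x] at h0
    simp only [dotProduct_neg, ← hbdef, ← hNdef] at h0
    have hcc : c * c⁻¹ = 1 := mul_inv_cancel₀ hc
    nlinarith [h0, hcc]
  have hYN : b ⬝ᵥ σ.mulVec b ≤ U * N := by rw [← hbb]; exact hY
  have hLU : L ≤ U := by
    rw [hL, hU]
    refine hmono ?_
    rw [Fin.le_def]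
    simp only []
    omega
  have h1 := hineq 1 one_ne_zero
  simp only [one_pow, inv_one, one_mul] at h1
  have hU1 : (1:ℝ) ≤ U := by nlinarith [hX, hYN, hN, hLU, h1]
  have hU0 : (0:ℝ) < U := by linarith
  set cc := Real.sqrt U with hccdef
  have hccsq : cc^2 = U := Real.sq_sqrt (le_of_lt hU0)
  have hccne : cc ≠ 0 := by
    rw [hccdef]
    exact ne_of_gt (Real.sqrt_pos.mpr hU0)
  have h2 := hineq cc hccne
  have hinv : (cc⁻¹)^2 = U⁻¹ := by rw [inv_pow, hccsq]
  rw [hccsq, hinv] at h2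
  have hA : U * (x ⬝ᵥ σ.mulVec x) ≤ U * (L * N) := mul_le_mul_of_nonneg_left hX (le_of_lt hU0)
  have hB : U⁻¹ * (b ⬝ᵥ σ.mulVec b) ≤ U⁻¹ * (U * N) :=
    mul_le_mul_of_nonneg_left hYN (by positivity)
  have hUU : U⁻¹ * (U * N) = N := by field_simp
  have hre : U * (L * N) = (L * U) * N := by ring
  have hfin : (1:ℝ) * N ≤ (L * U) * N := by linarith
  have hLU1 : (1:ℝ) ≤ L * U := (mul_le_mul_iff_of_pos_right hN).1 hfin
  rw [hgoal]
  exact hLU1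
end

section
/- (Maximal unconditional squeezing.) Let A and D be real 2n×2n matrices such that Ã := −(A + Aᵀ) is positive definite and D is symmetric positive semidefinite. Let σ be a real symmetric 2n×2n matrix satisfying both the uncertainty relation σ + iΩ ≥ 0 and the Lyapunov inequality Aσ + σAᵀ + D ≥ 0. Then the smallest eigenvalue of σ is bounded below as λ₁↑ ≥ α₁↑ / δ₁↓, where α₁↑ is the smallest eigenvalue of Ã and δ₁↓ is the largest eigenvalue of D. -/
open Matrix
open scoped ComplexOrder

section AuxSqueezing

variable {d : ℕ}

lemma eigUp_apply' {M : Matrix (Fin d) (Fin d) ℝ} (hM : M.IsHermitian) (i : Fin d) :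
    eigUp M i = hM.eigenvalues (Tuple.sort hM.eigenvalues i) := by
  simp only [eigUp, dif_pos hM, Function.comp_apply]

lemma eigUp_zero_le' {M : Matrix (Fin d) (Fin d) ℝ} (hM : M.IsHermitian) (h0 : 0 < d)
    (i : Fin d) : eigUp M ⟨0, h0⟩ ≤ hM.eigenvalues i := by
  obtain ⟨j, rfl⟩ := (Tuple.sort hM.eigenvalues).surjective i
  rw [eigUp_apply' hM]
  exact Tuple.monotone_sort hM.eigenvalues (by simp [Fin.le_def])

lemma le_eigDown_zero' {M : Matrix (Fin d) (Fin d) ℝ} (hM : M.IsHermitian) (h0 : 0 < d)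
    (i : Fin d) : hM.eigenvalues i ≤ eigDown M ⟨0, h0⟩ := by
  obtain ⟨j, rfl⟩ := (Tuple.sort hM.eigenvalues).surjective i
  rw [eigDown, eigUp_apply' hM]
  refine Tuple.monotone_sort hM.eigenvalues ?_
  simp [Fin.le_def, Fin.rev]
  omega

lemma eigvec_dot' {M : Matrix (Fin d) (Fin d) ℝ} (hM : M.IsHermitian) (i : Fin d) :
    (⇑(hM.eigenvectorBasis i) : Fin d → ℝ) ⬝ᵥ ⇑(hM.eigenvectorBasis i) = 1 := by
  have h1 : ‖hM.eigenvectorBasis i‖ = 1 := hM.eigenvectorBasis.orthonormal.1 i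
  have h2 := EuclideanSpace.inner_eq_star_dotProduct (𝕜 := ℝ) (hM.eigenvectorBasis i)
    (hM.eigenvectorBasis i)
  rw [real_inner_self_eq_norm_sq, h1] at h2
  simpa using h2.symm

lemma conj_diag_eq' {M : Matrix (Fin d) (Fin d) ℝ} (hM : M.IsHermitian) (c : ℝ) :
    M - c • 1 = (hM.eigenvectorUnitary : Matrix (Fin d) (Fin d) ℝ) *
      diagonal (fun i => hM.eigenvalues i - c) *
      (hM.eigenvectorUnitary : Matrix (Fin d) (Fin d) ℝ)ᴴ := by
  have hU : (hM.eigenvectorUnitary : Matrix (Fin d) (Fin d) ℝ) *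
      star (hM.eigenvectorUnitary : Matrix (Fin d) (Fin d) ℝ) = 1 :=
    (Matrix.mem_unitaryGroup_iff).mp hM.eigenvectorUnitary.2
  conv_lhs => rw [hM.spectral_theorem, Unitary.conjStarAlgAut_apply]
  rw [← Matrix.star_eq_conjTranspose]
  have : (c • (1 : Matrix (Fin d) (Fin d) ℝ)) =
      (hM.eigenvectorUnitary : Matrix (Fin d) (Fin d) ℝ) * (c • 1) *
      star (hM.eigenvectorUnitary : Matrix (Fin d) (Fin d) ℝ) := by
    rw [Matrix.mul_smul, Matrix.mul_one, Matrix.smul_mul, hU]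
  rw [this, ← Matrix.sub_mul, ← Matrix.mul_sub]
  congr 1
  congr 1
  rw [Matrix.smul_one_eq_diagonal, Matrix.diagonal_sub]
  simp

lemma sub_smul_one_posSemidef' {M : Matrix (Fin d) (Fin d) ℝ} (hM : M.IsHermitian) {c : ℝ}
    (hc : ∀ i, c ≤ hM.eigenvalues i) : (M - c • 1).PosSemidef := by
  rw [conj_diag_eq' hM c]
  exact (Matrix.PosSemidef.diagonal (fun i => sub_nonneg.mpr (hc i))).mul_mul_conjTranspose_same _

lemma smul_one_sub_posSemidef' {M : Matrix (Fin d) (Fin d) ℝ} (hM : M.IsHermitian) {c : ℝ}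
    (hc : ∀ i, hM.eigenvalues i ≤ c) : (c • 1 - M).PosSemidef := by
  rw [← neg_sub M (c • 1), conj_diag_eq' hM c]
  have h1 : -((hM.eigenvectorUnitary : Matrix (Fin d) (Fin d) ℝ) *
      diagonal (fun i => hM.eigenvalues i - c) *
      (hM.eigenvectorUnitary : Matrix (Fin d) (Fin d) ℝ)ᴴ)
      = (hM.eigenvectorUnitary : Matrix (Fin d) (Fin d) ℝ) *
      diagonal (fun i => c - hM.eigenvalues i) *
      (hM.eigenvectorUnitary : Matrix (Fin d) (Fin d) ℝ)ᴴ := by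
    have hd : diagonal (fun i => c - hM.eigenvalues i)
        = -diagonal (fun i => hM.eigenvalues i - c) := by
      rw [Matrix.diagonal_neg, show (fun i => -(hM.eigenvalues i - c))
        = fun i => c - hM.eigenvalues i from funext fun i => by ring]
    rw [hd, Matrix.mul_neg, Matrix.neg_mul]
  rw [h1]
  exact (Matrix.PosSemidef.diagonal fun i => sub_nonneg.mpr (hc i)).mul_mul_conjTranspose_same _

lemma quad_le' {M : Matrix (Fin d) (Fin d) ℝ} {c : ℝ} (h : (c • 1 - M).PosSemidef)
    (x : Fin d → ℝ) : x ⬝ᵥ M *ᵥ x ≤ c * (x ⬝ᵥ x) := by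
  have h2 := h.dotProduct_mulVec_nonneg x
  rw [star_trivial, Matrix.sub_mulVec, dotProduct_sub, Matrix.smul_mulVec,
    Matrix.one_mulVec, dotProduct_smul] at h2
  simpa [smul_eq_mul] using sub_nonneg.mp h2

lemma le_quad' {M : Matrix (Fin d) (Fin d) ℝ} {c : ℝ} (h : (M - c • 1).PosSemidef)
    (x : Fin d → ℝ) : c * (x ⬝ᵥ x) ≤ x ⬝ᵥ M *ᵥ x := by
  have h2 := h.dotProduct_mulVec_nonneg x
  rw [star_trivial, Matrix.sub_mulVec, dotProduct_sub, Matrix.smul_mulVec,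
    Matrix.one_mulVec, dotProduct_smul] at h2
  simpa [smul_eq_mul] using sub_nonneg.mp h2

lemma omega_transpose' (n : ℕ) : (Omega n)ᵀ = -(Omega n) := by
  ext i j
  simp only [Omega, transpose_apply, Matrix.neg_apply, of_apply]
  split_ifs <;> try norm_num
  all_goals omega

/-- index of the partner of `i` -/
def pIdx (n : ℕ) (i : Fin (2*n)) : Fin (2*n) :=
  ⟨if (i : ℕ) % 2 = 0 then (i : ℕ) + 1 else (i : ℕ) - 1, by
    have := i.isLt; split <;> omega⟩

lemma omega_apply_eq' (n : ℕ) (i j : Fin (2*n)) :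
    Omega n i j = if j = pIdx n i then (if (i : ℕ) % 2 = 0 then 1 else -1) else 0 := by
  have hlt := i.isLt
  have hlt' := j.isLt
  simp only [Omega, of_apply, pIdx, Fin.ext_iff]
  split_ifs <;> try norm_num
  all_goals omega

lemma omega_mul_transpose' (n : ℕ) : Omega n * (Omega n)ᵀ = 1 := by
  ext i k
  simp only [Matrix.mul_apply, transpose_apply, omega_apply_eq', Matrix.one_apply]
  rw [Finset.sum_congr rfl (fun j _ => by
    rw [show (if j = pIdx n i then (if (i : ℕ) % 2 = 0 then (1:ℝ) else -1) else 0) *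
      (if j = pIdx n k then (if (k : ℕ) % 2 = 0 then (1:ℝ) else -1) else 0)
      = if j = pIdx n i then ((if (i : ℕ) % 2 = 0 then (1:ℝ) else -1) *
          (if j = pIdx n k then (if (k : ℕ) % 2 = 0 then (1:ℝ) else -1) else 0)) else 0 from by
      split_ifs <;> simp])]
  rw [Finset.sum_ite_eq' _ (pIdx n i)]
  simp only [Finset.mem_univ, if_true]
  by_cases hik : i = k
  · subst hik
    simp only [if_pos rfl]
    split_ifs <;> norm_num
  · have hne : pIdx n i ≠ pIdx n k := by
      simp only [pIdx, Fin.ext_iff, ne_eq]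
      have := i.isLt; have := k.isLt
      have : (i : ℕ) ≠ (k : ℕ) := fun h => hik (Fin.ext h)
      split_ifs <;> omega
    rw [if_neg hne, if_neg hik, mul_zero]

lemma term_re' (a b s w c e : ℝ) :
    ((starRingEnd ℂ) ((a:ℂ) + Complex.I * b) *
      ((((s:ℂ) + Complex.I * w)) * ((c:ℂ) + Complex.I * e))).re
      = s * (a*c + b*e) - w * (a*e - b*c) := by
  simp [Complex.mul_re, Complex.mul_im]
  ring

lemma cm_quad' {n : ℕ} {σ : Matrix (Fin (2*n)) (Fin (2*n)) ℝ} (hCM : IsCM n σ)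
    (u v : Fin (2*n) → ℝ) :
    2 * (u ⬝ᵥ Omega n *ᵥ v) ≤ u ⬝ᵥ σ *ᵥ u + v ⬝ᵥ σ *ᵥ v := by
  set M := σ.map (Complex.ofReal ·) + Complex.I • (Omega n).map (Complex.ofReal ·) with hM
  set z : Fin (2*n) → ℂ := fun i => (u i : ℂ) + Complex.I * v i with hz
  have h0 := hCM.2.dotProduct_mulVec_nonneg z
  have hre : 0 ≤ (star z ⬝ᵥ (M *ᵥ z)).re := by
    rw [Complex.le_def] at h0
    simpa using h0.1
  have hentry : ∀ i j, M i j = ((σ i j : ℂ) + Complex.I * (Omega n i j : ℂ)) := by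
    intro i j
    simp [hM, Matrix.add_apply, Matrix.smul_apply, Matrix.map_apply, smul_eq_mul]
  have hcalc : (star z ⬝ᵥ (M *ᵥ z)).re
      = ∑ i, ∑ j, (σ i j * (u i * u j + v i * v j)
        - Omega n i j * (u i * v j - v i * u j)) := by
    simp only [dotProduct, mulVec, dotProduct, Pi.star_apply, Finset.mul_sum, Complex.re_sum]
    refine Finset.sum_congr rfl fun i _ => ?_
    refine Finset.sum_congr rfl fun j _ => ?_
    rw [hentry i j, hz]
    exact term_re' (u i) (v i) (σ i j) (Omega n i j) (u j) (v j)
  have hexp : u ⬝ᵥ σ *ᵥ u + v ⬝ᵥ σ *ᵥ v - (u ⬝ᵥ Omega n *ᵥ v) + (v ⬝ᵥ Omega n *ᵥ u)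
      = ∑ i, ∑ j, (σ i j * (u i * u j + v i * v j)
        - Omega n i j * (u i * v j - v i * u j)) := by
    simp only [dotProduct, mulVec, Finset.mul_sum, ← Finset.sum_add_distrib,
      ← Finset.sum_sub_distrib]
    refine Finset.sum_congr rfl fun i _ => ?_
    refine Finset.sum_congr rfl fun j _ => ?_
    ring
  have hanti : v ⬝ᵥ Omega n *ᵥ u = -(u ⬝ᵥ Omega n *ᵥ v) := by
    rw [Matrix.dotProduct_mulVec, ← Matrix.mulVec_transpose, omega_transpose',
      Matrix.neg_mulVec, neg_dotProduct, dotProduct_comm]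
  rw [hcalc, ← hexp, hanti] at hre
  linarith

end AuxSqueezing

/-- **Proposition 1 (Maximal unconditional squeezing).**
If `Ã := −(A + Aᵀ)` is positive definite, `D` is positive semidefinite, and the covariance
matrix `σ` (i.e. `σ + iΩ ≥ 0`) satisfies `Aσ + σAᵀ + D ≥ 0`, then the smallest eigenvalue
of `σ` satisfies `λ₁↑ ≥ α₁↑ / δ₁↓`. -/
theorem maximal_unconditional_squeezing (n : ℕ) (hn : 1 ≤ n)
    (A D σ : Matrix (Fin (2*n)) (Fin (2*n)) ℝ)
    (hA : (-(A + Aᵀ)).PosDef) (hD : D.PosSemidef)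
    (hCM : IsCM n σ) (hLyap : (A * σ + σ * Aᵀ + D).PosSemidef) :
    eigUp (-(A + Aᵀ)) ⟨0, by omega⟩ / eigDown D ⟨0, by omega⟩ ≤ eigUp σ ⟨0, by omega⟩ := by
  have h0 : 0 < 2 * n := by omega
  -- Hermitian facts
  have hσ : σ.IsHermitian := by
    rw [Matrix.IsHermitian, Matrix.conjTranspose_eq_transpose_of_trivial]
    exact hCM.1
  have hAt : (-(A + Aᵀ)).IsHermitian := hA.1
  have hDh : D.IsHermitian := hD.1
  -- σ is positive semidefinite
  have hPSD : σ.PosSemidef := by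
    refine .of_dotProduct_mulVec_nonneg hσ fun x => ?_
    have := cm_quad' hCM x 0
    rw [star_trivial]
    simpa using this
  set α := eigUp (-(A + Aᵀ)) ⟨0, h0⟩ with hα
  set δ := eigDown D ⟨0, h0⟩ with hδ
  set lm := eigUp σ ⟨0, h0⟩ with hlm
  set lM := eigDown σ ⟨0, h0⟩ with hlM
  -- quadratic form bounds
  have hαq : ∀ x : Fin (2*n) → ℝ, α * (x ⬝ᵥ x) ≤ x ⬝ᵥ (-(A + Aᵀ)) *ᵥ x := fun x =>
    le_quad' (sub_smul_one_posSemidef' hAt (fun i => eigUp_zero_le' hAt h0 i)) x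
  have hδq : ∀ x : Fin (2*n) → ℝ, x ⬝ᵥ D *ᵥ x ≤ δ * (x ⬝ᵥ x) := fun x =>
    quad_le' (smul_one_sub_posSemidef' hDh (fun i => le_eigDown_zero' hDh h0 i)) x
  have hσq : ∀ x : Fin (2*n) → ℝ, x ⬝ᵥ σ *ᵥ x ≤ lM * (x ⬝ᵥ x) := fun x =>
    quad_le' (smul_one_sub_posSemidef' hσ (fun i => le_eigDown_zero' hσ h0 i)) x
  -- positivity facts
  have hαpos : 0 < α := by
    rw [hα, eigUp_apply' hAt]
    exact hA.eigenvalues_pos _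
  have hlm0 : 0 ≤ lm := by
    rw [hlm, eigUp_apply' hσ]
    exact hPSD.eigenvalues_nonneg _
  -- eigenvector for lM
  set iM := Tuple.sort hσ.eigenvalues ((⟨0, h0⟩ : Fin (2*n)).rev) with hiM
  set y : Fin (2*n) → ℝ := ⇑(hσ.eigenvectorBasis iM) with hy
  have hyev : σ *ᵥ y = lM • y := by
    rw [hlM, eigDown, eigUp_apply' hσ, ← hiM, hy]
    exact hσ.mulVec_eigenvectorBasis iM
  have hydot : y ⬝ᵥ y = 1 := eigvec_dot' hσ iM
  -- Step 2 : α * lM ≤ δ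
  have hstep2 : α * lM ≤ δ := by
    have h2 := hLyap.dotProduct_mulVec_nonneg y
    rw [star_trivial, Matrix.add_mulVec, Matrix.add_mulVec, dotProduct_add, dotProduct_add,
      ← Matrix.mulVec_mulVec, hyev, Matrix.mulVec_smul, dotProduct_smul,
      ← Matrix.mulVec_mulVec] at h2
    have hsy : y ⬝ᵥ σ *ᵥ (Aᵀ *ᵥ y) = lM * (y ⬝ᵥ Aᵀ *ᵥ y) := by
      rw [Matrix.dotProduct_mulVec y σ, ← Matrix.mulVec_transpose, show σᵀ = σ from hCM.1,
        hyev, smul_dotProduct, smul_eq_mul]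
    rw [hsy, smul_eq_mul] at h2
    have hq1 := hαq y
    have hq2 := hδq y
    rw [hydot] at hq1 hq2
    have hnegq : y ⬝ᵥ (-(A + Aᵀ)) *ᵥ y = -(y ⬝ᵥ A *ᵥ y) - (y ⬝ᵥ Aᵀ *ᵥ y) := by
      rw [Matrix.neg_mulVec, dotProduct_neg, Matrix.add_mulVec, dotProduct_add]
      ring
    rw [hnegq] at hq1
    have hlM0 : 0 ≤ lM := by
      rw [hlM, eigDown, eigUp_apply' hσ]
      exact hPSD.eigenvalues_nonneg _
    nlinarith [mul_le_mul_of_nonneg_left hq1 hlM0]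
  -- eigenvector for lm
  set im := Tuple.sort hσ.eigenvalues (⟨0, h0⟩ : Fin (2*n)) with him
  set x : Fin (2*n) → ℝ := ⇑(hσ.eigenvectorBasis im) with hx
  have hxev : σ *ᵥ x = lm • x := by
    rw [hlm, eigUp_apply' hσ, ← him, hx]
    exact hσ.mulVec_eigenvectorBasis im
  have hxdot : x ⬝ᵥ x = 1 := eigvec_dot' hσ im
  set w : Fin (2*n) → ℝ := (Omega n)ᵀ *ᵥ x with hw
  have hxw : x ⬝ᵥ Omega n *ᵥ w = 1 := by
    rw [hw, Matrix.mulVec_mulVec, omega_mul_transpose', Matrix.one_mulVec, hxdot]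
  have hww : w ⬝ᵥ w = 1 := by
    rw [hw, Matrix.dotProduct_mulVec, Matrix.vecMul_transpose, Matrix.mulVec_mulVec,
      omega_mul_transpose', Matrix.one_mulVec, hxdot]
  have hxsx : x ⬝ᵥ σ *ᵥ x = lm := by
    rw [hxev, dotProduct_smul, hxdot, smul_eq_mul, mul_one]
  have hwsw : w ⬝ᵥ σ *ᵥ w ≤ lM := by
    have := hσq w
    rwa [hww, mul_one] at this
  have key : ∀ t : ℝ, 2 * t ≤ lm + t ^ 2 * lM := by
    intro t
    have h := cm_quad' hCM x (t • w)
    rw [Matrix.mulVec_smul, dotProduct_smul, hxw, smul_dotProduct, Matrix.mulVec_smul,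
      dotProduct_smul, hxsx] at h
    simp only [smul_eq_mul, mul_one] at h
    have ht2 : (0:ℝ) ≤ t ^ 2 := sq_nonneg t
    have hts : t * (t * (w ⬝ᵥ σ *ᵥ w)) = t ^ 2 * (w ⬝ᵥ σ *ᵥ w) := by ring
    rw [hts] at h
    nlinarith [mul_le_mul_of_nonneg_left hwsw ht2]
  have hlMpos : 0 < lM := by
    by_contra hc
    push_neg at hc
    have h := key ((lm + 1) / 2)
    nlinarith [sq_nonneg ((lm + 1) / 2),
      mul_nonpos_of_nonneg_of_nonpos (sq_nonneg ((lm + 1) / 2)) hc]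
  have hprod : 1 ≤ lm * lM := by
    have h1 := key (1 / lM)
    have h2 : (1 / lM) ^ 2 * lM = 1 / lM := by
      field_simp
    rw [h2] at h1
    have h3 : 1 / lM ≤ lm := by linarith
    rwa [div_le_iff₀ hlMpos] at h3
  have hδpos : 0 < δ := lt_of_lt_of_le (by positivity) hstep2
  rw [div_le_iff₀ hδpos]
  nlinarith [mul_le_mul_of_nonneg_left hstep2 hlm0,
    mul_le_mul_of_nonneg_left hprod (le_of_lt hαpos)]
end

section
/- (Free system, squeezing bound is tight.) Fix N ≥ 0 and consider one mode (n = 1) with A = −(1/2)𝟙₂ and D = (1+2N)𝟙₂. The matrix σ = diag(1/(1+2N), 1+2N) satisfies σ + iΩ ≥ 0, satisfies the Lyapunov inequality Aσ + σAᵀ + D ≥ 0, and has smallest eigenvalue exactly 1/(1+2N). Hence the squeezing bound λ₁↑ ≥ 1/(1+2N) is attained. -/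
open Matrix
open scoped ComplexOrder

/-- **Free system, squeezing bound is tight.** For one mode with `A = −(1/2)𝟙₂` and
`D = (1+2N)𝟙₂`, the matrix `σ = diag(1/(1+2N), 1+2N)` is a covariance matrix satisfying
the Lyapunov inequality, with smallest eigenvalue exactly `1/(1+2N)`. -/
theorem free_system_squeezing_bound_tight (N : ℝ) (hN : 0 ≤ N)
    (A D σ : Matrix (Fin (2*1)) (Fin (2*1)) ℝ)
    (hA : A = (-(1/2) : ℝ) • 1) (hD : D = (1 + 2*N) • 1)
    (hσ : σ = !![1/(1+2*N), 0; 0, 1+2*N]) :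
    IsCM 1 σ ∧ (A * σ + σ * Aᵀ + D).PosSemidef ∧
      eigUp σ ⟨0, by omega⟩ = 1/(1+2*N) := by

  have hpos : (0:ℝ) < 1 + 2*N := by linarith
  have hne : (1 + 2*N) ≠ 0 := ne_of_gt hpos
  have ha_pos : (0:ℝ) < 1/(1+2*N) := by positivity
  have hprod1 : (1/(1+2*N)) * (1+2*N) = 1 := by field_simp
  have hale : (1/(1+2*N)) ≤ (1+2*N) := by
    have h1 : 1/(1+2*N) ≤ 1 := by
      rw [div_le_one hpos]; linarith
    linarith
  -- σ is diagonal
  have hdiag : σ = Matrix.diagonal ![1/(1+2*N), 1+2*N] := by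
    subst hσ
    ext i j
    fin_cases i <;> fin_cases j <;> simp [Matrix.diagonal]
  have hsymm : σ.IsSymm := by
    subst hσ
    ext i j
    fin_cases i <;> fin_cases j <;> simp [Matrix.transpose_apply]
  refine ⟨⟨hsymm, ?_⟩, ?_, ?_⟩
  · -- σ + iΩ ≥ 0
    set B : Matrix (Fin 1) (Fin (2*1)) ℂ :=
      !![(Real.sqrt (1/(1+2*N)) : ℂ), Complex.I * (Real.sqrt (1+2*N) : ℂ)] with hB
    have key : σ.map (Complex.ofReal ·) + Complex.I • (Omega 1).map (Complex.ofReal ·)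
        = Bᴴ * B := by
      subst hσ
      ext i j
      have hs1 : Real.sqrt (1/(1+2*N)) * Real.sqrt (1/(1+2*N)) = 1/(1+2*N) :=
        Real.mul_self_sqrt ha_pos.le
      have hs2 : Real.sqrt (1+2*N) * Real.sqrt (1+2*N) = 1+2*N :=
        Real.mul_self_sqrt hpos.le
      have hs3 : Real.sqrt (1/(1+2*N)) * Real.sqrt (1+2*N) = 1 := by
        rw [← Real.sqrt_mul ha_pos.le, hprod1, Real.sqrt_one]
      have hz : ((Real.sqrt (1+N*2) : ℝ) : ℂ) ≠ 0 := by
        norm_cast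
        exact Real.sqrt_ne_zero'.mpr (by linarith)
      have hsq : ((Real.sqrt (1+N*2) : ℝ) : ℂ)^2 = 1 + (N:ℂ)*2 := by
        rw [← Complex.ofReal_pow, Real.sq_sqrt (by linarith : (0:ℝ) ≤ 1+N*2)]
        push_cast; ring
      fin_cases i <;> fin_cases j <;>
        simp only [hB, Omega, Matrix.add_apply, Matrix.map_apply, Matrix.smul_apply,
          Matrix.mul_apply, Fin.sum_univ_one, Matrix.conjTranspose_apply,
          Matrix.cons_val', Matrix.cons_val_zero, Matrix.cons_val_one, Matrix.head_cons,
          Matrix.head_fin_const, Matrix.empty_val', Matrix.cons_val_fin_one, Matrix.of_apply,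
          _root_.map_mul, Complex.conj_ofReal, Complex.conj_I, smul_eq_mul] <;>
        norm_num <;>
        ring_nf <;>
        simp [Complex.I_sq, inv_pow, hsq, mul_inv_cancel₀ hz, mul_assoc]
    rw [key]
    exact Matrix.posSemidef_conjTranspose_mul_self B
  · -- Lyapunov
    have hcomb : A * σ + σ * Aᵀ + D
        = Matrix.diagonal ![(1+2*N) - 1/(1+2*N), 0] := by
      subst hA hD hσ
      ext i j
      fin_cases i <;> fin_cases j <;>
        simp [Matrix.mul_apply, Fin.sum_univ_two, Matrix.diagonal, Matrix.one_apply] <;> ring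
    rw [hcomb]
    refine Matrix.posSemidef_diagonal_iff.mpr fun i => ?_
    have hale' : (1+2*N)⁻¹ ≤ 1+2*N := by rwa [one_div] at hale
    fin_cases i <;> simp [hale, hale']
  · -- smallest eigenvalue
    have hherm : σ.IsHermitian := hsymm
    rw [eigUp, dif_pos hherm]
    set f : Fin (2*1) → ℝ := hherm.eigenvalues ∘ Tuple.sort hherm.eigenvalues with hf
    have hmono : Monotone f := Tuple.monotone_sort _
    have hspec : spectrum ℝ σ = Set.range ![1/(1+2*N), 1+2*N] := by
      rw [hdiag]; exact spectrum_diagonal _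
    have hmem : ∀ i, f i = 1/(1+2*N) ∨ f i = 1+2*N := by
      intro i
      have h1 : f i ∈ spectrum ℝ σ := hherm.eigenvalues_mem_spectrum_real _
      rw [hspec] at h1
      obtain ⟨j, hj⟩ := h1
      fin_cases j
      · left; exact hj.symm
      · right; exact hj.symm
    have hdet : f 0 * f 1 = 1 := by
      have h1 : σ.det = ∏ i, (hherm.eigenvalues i : ℝ) := hherm.det_eq_prod_eigenvalues
      have h2 : ∏ i, f i = ∏ i, hherm.eigenvalues i :=
        Equiv.prod_comp (Tuple.sort hherm.eigenvalues) hherm.eigenvalues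
      have h3 : σ.det = 1 := by
        rw [hσ, Matrix.det_fin_two_of]; simpa using hprod1
      have h4 : ∏ i, f i = f 0 * f 1 := Fin.prod_univ_two f
      rw [← h4, h2, ← h1, h3]
    have hle01 : f 0 ≤ f 1 := hmono (by norm_num : (0 : Fin (2*1)) ≤ 1)
    have hgoal : f 0 = 1/(1+2*N) := by
      rcases hmem 0 with h0 | h0
      · exact h0
      · rcases hmem 1 with h1 | h1
        · have h2 := hle01
          rw [h0, h1] at h2
          rw [h0]; linarith
        · have h2 := hdet
          rw [h0, h1] at h2
          rw [h0, eq_div_iff hne]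
          exact h2
    exact hgoal
end

section
/- (Free system, maximal entanglement.) Fix N ≥ 0 and consider two modes (n = 2) with A = −(1/2)𝟙₄ and D = (1+2N)𝟙₄. Then every real symmetric 4×4 matrix σ satisfying σ + iΩ ≥ 0 and Aσ + σAᵀ + D ≥ 0 has, for the 1 vs 1 mode bipartition, smallest partially transposed symplectic eigenvalue ν̃₋ ≥ 1/(1+2N); equivalently, its logarithmic negativity satisfies E_N(σ) ≤ log₂(1+2N). -/
open Matrix
open scoped ComplexOrder

section Aux

private lemma fvA0 : ((0 : Fin (2*2)) : ℕ) = 0 := rfl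
private lemma fvA1 : ((1 : Fin (2*2)) : ℕ) = 1 := rfl
private lemma fvA2 : ((2 : Fin (2*2)) : ℕ) = 2 := rfl
private lemma fvA3 : ((3 : Fin (2*2)) : ℕ) = 3 := rfl

private lemma omegaPT_orth : (OmegaPT 2 1)ᵀ * OmegaPT 2 1 = 1 := by
  ext i j
  fin_cases i <;> fin_cases j <;>
    simp [OmegaPT, Tmat, Omega, Matrix.mul_apply, Matrix.one_apply, Fin.sum_univ_four,
      fvA0, fvA1, fvA2, fvA3]

private lemma omega_T : (Omega 2)ᵀ = - Omega 2 := by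
  ext i j
  fin_cases i <;> fin_cases j <;> simp [Omega, fvA0, fvA1, fvA2, fvA3]

private lemma omega_orth : (Omega 2)ᵀ * Omega 2 = 1 := by
  ext i j
  fin_cases i <;> fin_cases j <;>
    simp [Omega, Matrix.mul_apply, Matrix.one_apply, Fin.sum_univ_four, fvA0, fvA1, fvA2, fvA3]

private lemma omega_sq : Omega 2 * Omega 2 = -1 := by
  have h : Omega 2 = -(Omega 2)ᵀ := by rw [omega_T, neg_neg]
  nth_rewrite 1 [h]
  rw [Matrix.neg_mul, omega_orth]

/-- dot product of mapped vectors through a mapped matrix. -/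
private lemma mapC_dot (M : Matrix (Fin (2*2)) (Fin (2*2)) ℝ) (a b : Fin (2*2) → ℝ) :
    (fun j => ((a j : ℝ) : ℂ)) ⬝ᵥ (M.map (Complex.ofReal ·) *ᵥ fun j => ((b j : ℝ) : ℂ))
      = ((a ⬝ᵥ (M *ᵥ b) : ℝ) : ℂ) := by
  have h1 : (M.map (Complex.ofReal ·) *ᵥ fun j => ((b j : ℝ) : ℂ))
      = fun j => (((M *ᵥ b) j : ℝ) : ℂ) := by
    funext j
    exact (RingHom.map_mulVec Complex.ofRealHom M b j).symm
  rw [h1]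
  exact (RingHom.map_dotProduct Complex.ofRealHom a (M *ᵥ b)).symm

private lemma symm_quad {d : ℕ} {M : Matrix (Fin d) (Fin d) ℝ} (hM : Mᵀ = M)
    (a b : Fin d → ℝ) : a ⬝ᵥ (M *ᵥ b) = b ⬝ᵥ (M *ᵥ a) := by
  calc a ⬝ᵥ (M *ᵥ b) = (a ᵥ* M) ⬝ᵥ b := Matrix.dotProduct_mulVec _ _ _
    _ = (M *ᵥ a) ⬝ᵥ b := by conv_lhs => rw [← hM, Matrix.vecMul_transpose]
    _ = b ⬝ᵥ (M *ᵥ a) := dotProduct_comm _ _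

private lemma antisym_quad {d : ℕ} {M : Matrix (Fin d) (Fin d) ℝ} (hM : Mᵀ = -M)
    (a : Fin d → ℝ) : a ⬝ᵥ (M *ᵥ a) = 0 := by
  have h : a ⬝ᵥ (M *ᵥ a) = -(a ⬝ᵥ (M *ᵥ a)) := by
    calc a ⬝ᵥ (M *ᵥ a) = (a ᵥ* M) ⬝ᵥ a := Matrix.dotProduct_mulVec _ _ _
      _ = (Mᵀ *ᵥ a) ⬝ᵥ a := by rw [Matrix.mulVec_transpose]
      _ = ((-M) *ᵥ a) ⬝ᵥ a := by rw [hM]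
      _ = -(a ⬝ᵥ (M *ᵥ a)) := by
          rw [Matrix.neg_mulVec, neg_dotProduct, dotProduct_comm]
  linarith

private lemma dot_self_nonneg {d : ℕ} (a : Fin d → ℝ) : 0 ≤ a ⬝ᵥ a :=
  Finset.sum_nonneg fun i _ => mul_self_nonneg (a i)

private lemma msqrt_spec {d : ℕ} {σ : Matrix (Fin d) (Fin d) ℝ} (hσ : σ.PosSemidef) :
    (msqrt σ).PosSemidef ∧ msqrt σ * msqrt σ = σ := by
  rw [msqrt, dif_pos hσ]
  have hUs : (star hσ.1.eigenvectorUnitary : Matrix (Fin d) (Fin d) ℝ)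
      = (hσ.1.eigenvectorUnitary.1)ᴴ := by
    rfl
  have hUU : (hσ.1.eigenvectorUnitary.1)ᴴ * hσ.1.eigenvectorUnitary.1 = 1 := by
    rw [← hUs]; exact Unitary.coe_star_mul_self _
  rw [hUs]
  constructor
  · apply PosSemidef.mul_mul_conjTranspose_same
    rw [posSemidef_diagonal_iff]
    intro i
    simp [Real.sqrt_nonneg]
  · conv_rhs => rw [hσ.1.spectral_theorem, Unitary.conjStarAlgAut_apply, hUs]
    have e : ∀ X Y V W : Matrix (Fin d) (Fin d) ℝ, V * X * W * (V * Y * W) = V * (X * (W * V) * Y) * W :=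
      fun X Y V W => by simp only [Matrix.mul_assoc]
    rw [e, hUU, Matrix.mul_one, diagonal_mul_diagonal]
    congr 3
    funext i
    simp [Real.mul_self_sqrt (hσ.eigenvalues_nonneg i)]

end Aux

/-- **Free system, maximal entanglement.** For two modes with `A = −(1/2)𝟙₄` and
`D = (1+2N)𝟙₄`, every covariance matrix `σ` satisfying `Aσ + σAᵀ + D ≥ 0` has, for the
1 vs 1 bipartition, `ν̃₋ ≥ 1/(1+2N)`, equivalently `E_N(σ) ≤ log₂(1+2N)`. -/
theorem free_system_maximal_entanglement (N : ℝ) (hN : 0 ≤ N)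
    (A D σ : Matrix (Fin (2*2)) (Fin (2*2)) ℝ)
    (hA : A = (-(1/2) : ℝ) • 1) (hD : D = (1 + 2*N) • 1)
    (hCM : IsCM 2 σ) (hLyap : (A * σ + σ * Aᵀ + D).PosSemidef) :
    1 / (1 + 2*N) ≤ nuMin 2 1 σ ∧ logNeg 2 1 σ ≤ Real.logb 2 (1 + 2*N) := by
  have hc0 : (0:ℝ) < 1 + 2*N := by linarith
  have hc1 : (1:ℝ) ≤ 1 + 2*N := by linarith
  have hcne : (1 + 2*N : ℝ) ≠ 0 := ne_of_gt hc0
  have hσT : σᵀ = σ := hCM.1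
  -- upper bound : σ ≤ (1+2N) 1
  have hub : ∀ x : Fin (2*2) → ℝ, x ⬝ᵥ (σ *ᵥ x) ≤ (1 + 2*N) * (x ⬝ᵥ x) := by
    intro x
    have heq : A * σ + σ * Aᵀ + D = (1 + 2*N) • (1 : Matrix (Fin (2*2)) (Fin (2*2)) ℝ) - σ := by
      subst hA hD
      rw [Matrix.transpose_smul, Matrix.transpose_one, Matrix.smul_mul, Matrix.mul_smul,
        Matrix.one_mul, Matrix.mul_one]
      module
    rw [heq] at hLyap
    have h := hLyap.dotProduct_mulVec_nonneg x
    rw [star_trivial] at h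
    rw [Matrix.sub_mulVec, Matrix.smul_mulVec, Matrix.one_mulVec, dotProduct_sub,
      dotProduct_smul, smul_eq_mul] at h
    linarith
  -- lower bound : σ ≥ (1+2N)⁻¹ 1
  have hlb : ∀ x : Fin (2*2) → ℝ, (x ⬝ᵥ x) / (1 + 2*N) ≤ x ⬝ᵥ (σ *ᵥ x) := by
    intro x
    set w : Fin (2*2) → ℝ := Omega 2 *ᵥ x with hw
    have hww : w ⬝ᵥ w = x ⬝ᵥ x := by
      rw [hw, Matrix.dotProduct_mulVec, Matrix.vecMul_mulVec, omega_orth, Matrix.vecMul_one]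
    have hΩT : (Omega 2)ᵀ = -(Omega 2) := omega_T
    have hxx0 : x ⬝ᵥ (Omega 2 *ᵥ x) = 0 := antisym_quad hΩT x
    have hww0 : w ⬝ᵥ (Omega 2 *ᵥ w) = 0 := antisym_quad hΩT w
    have hxw : x ⬝ᵥ (Omega 2 *ᵥ w) = -(x ⬝ᵥ x) := by
      rw [hw, Matrix.mulVec_mulVec, omega_sq, Matrix.neg_mulVec, Matrix.one_mulVec,
        dotProduct_neg]
    have hwx : w ⬝ᵥ (Omega 2 *ᵥ x) = x ⬝ᵥ x := by rw [← hw, hww]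
    have hσc : x ⬝ᵥ (σ *ᵥ w) = w ⬝ᵥ (σ *ᵥ x) := symm_quad hσT x w
    have key : ∀ t : ℝ, 0 ≤ x ⬝ᵥ (σ *ᵥ x) + t^2 * (w ⬝ᵥ (σ *ᵥ w)) + 2*t*(x ⬝ᵥ x) := by
      intro t
      set v : Fin (2*2) → ℂ :=
        (fun j => ((x j : ℝ) : ℂ)) + (↑t * Complex.I) • (fun j => ((w j : ℝ) : ℂ)) with hv
      have hPSD := hCM.2.dotProduct_mulVec_nonneg v
      have hsv : star v = (fun j => ((x j : ℝ) : ℂ))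
          - (↑t * Complex.I) • (fun j => ((w j : ℝ) : ℂ)) := by
        funext j
        simp [hv, Complex.ext_iff]
      have hexp : star v ⬝ᵥ
          ((σ.map (Complex.ofReal ·) + Complex.I • (Omega 2).map (Complex.ofReal ·)) *ᵥ v)
          = ((x ⬝ᵥ (σ *ᵥ x) + t^2 * (w ⬝ᵥ (σ *ᵥ w)) + 2*t*(x ⬝ᵥ x) : ℝ) : ℂ) := by
        rw [hsv, hv]
        simp only [Matrix.add_mulVec, Matrix.smul_mulVec, Matrix.mulVec_add,
          Matrix.mulVec_smul, sub_dotProduct, dotProduct_add,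
          dotProduct_smul, smul_dotProduct, smul_eq_mul, mapC_dot]
        rw [hxx0, hww0, hxw, hwx, hσc]
        push_cast
        linear_combination (-((t:ℂ)^2 * ((w ⬝ᵥ (σ *ᵥ w) : ℝ) : ℂ)
          + 2*(t:ℂ) * ((x ⬝ᵥ x : ℝ) : ℂ))) * Complex.I_sq
      rw [hexp] at hPSD
      exact Complex.zero_le_real.mp hPSD
    have hb := hub w
    rw [hww] at hb
    have hk := key (-(1/(1+2*N)))
    have h2 : 0 ≤ (x ⬝ᵥ (σ *ᵥ x)) * (1+2*N)^2 + (w ⬝ᵥ (σ *ᵥ w)) - 2*(x ⬝ᵥ x)*(1+2*N) := by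
      have hcc : (0:ℝ) < (1+2*N)^2 := by positivity
      have h3 := mul_le_mul_of_nonneg_right hk (le_of_lt hcc)
      calc (0:ℝ) = 0 * (1+2*N)^2 := by ring
        _ ≤ (x ⬝ᵥ (σ *ᵥ x) + (-(1/(1+2*N)))^2 * (w ⬝ᵥ (σ *ᵥ w))
              + 2*(-(1/(1+2*N)))*(x ⬝ᵥ x)) * (1+2*N)^2 := h3
        _ = (x ⬝ᵥ (σ *ᵥ x)) * (1+2*N)^2 + (w ⬝ᵥ (σ *ᵥ w)) - 2*(x ⬝ᵥ x)*(1+2*N) := by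
            field_simp
            ring
    rw [div_le_iff₀ hc0]
    nlinarith [h2, hb, hc0]
  -- σ is positive semidefinite
  have hσherm : σ.IsHermitian := by
    rw [Matrix.IsHermitian, Matrix.conjTranspose_eq_transpose_of_trivial]
    exact hσT
  have hσps : σ.PosSemidef := by
    refine Matrix.PosSemidef.of_dotProduct_mulVec_nonneg hσherm fun x => ?_
    rw [star_trivial]
    have h1 := hlb x
    have h2 : 0 ≤ (x ⬝ᵥ x) / (1 + 2*N) := div_nonneg (dot_self_nonneg x) (le_of_lt hc0)
    linarith
  -- the square root
  have hmsq := msqrt_spec hσps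
  set s : Matrix (Fin (2*2)) (Fin (2*2)) ℝ := msqrt σ with hs
  have hs_ps : s.PosSemidef := hmsq.1
  have hsT : sᵀ = s := by
    have h := hs_ps.1
    rwa [Matrix.IsHermitian, Matrix.conjTranspose_eq_transpose_of_trivial] at h
  have hss : s * s = σ := hmsq.2
  set M : Matrix (Fin (2*2)) (Fin (2*2)) ℝ := s * (OmegaPT 2 1)ᵀ * σ * OmegaPT 2 1 * s with hM
  -- M is positive semidefinite (needed for nonemptiness of the spectrum)
  have hMps : M.PosSemidef := by
    have h := hσps.conjTranspose_mul_mul_same (B := OmegaPT 2 1 * s)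
    have he : (OmegaPT 2 1 * s)ᴴ * σ * (OmegaPT 2 1 * s) = M := by
      rw [Matrix.conjTranspose_mul, hs_ps.1.eq, Matrix.conjTranspose_eq_transpose_of_trivial,
        hM]
      noncomm_ring
    rwa [he] at h
  -- quadratic lower bound for M
  have hMquad : ∀ x : Fin (2*2) → ℝ,
      (1/(1+2*N))^2 * (x ⬝ᵥ x) ≤ x ⬝ᵥ (M *ᵥ x) := by
    intro x
    set y : Fin (2*2) → ℝ := s *ᵥ x with hy
    set z : Fin (2*2) → ℝ := OmegaPT 2 1 *ᵥ y with hz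
    have h1 : x ⬝ᵥ (M *ᵥ x) = z ⬝ᵥ (σ *ᵥ z) := by
      have e1 : M *ᵥ x = s *ᵥ ((OmegaPT 2 1)ᵀ *ᵥ (σ *ᵥ z)) := by
        rw [hz, hy, hM]
        simp only [Matrix.mulVec_mulVec, Matrix.mul_assoc]
      rw [e1, Matrix.dotProduct_mulVec, ← hsT, Matrix.vecMul_transpose, ← hy,
        Matrix.dotProduct_mulVec, Matrix.vecMul_transpose, ← hz]
    have h2 : z ⬝ᵥ z = y ⬝ᵥ y := by
      rw [hz, Matrix.dotProduct_mulVec, Matrix.vecMul_mulVec, omegaPT_orth, Matrix.vecMul_one]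
    have h3 : y ⬝ᵥ y = x ⬝ᵥ (σ *ᵥ x) := by
      rw [hy, Matrix.dotProduct_mulVec, Matrix.vecMul_mulVec, hsT, hss,
        ← Matrix.dotProduct_mulVec]
    have h4 := hlb z
    have h5 := hlb x
    rw [h1]
    rw [h2, h3] at h4
    rw [div_le_iff₀ hc0] at h4 h5
    have h6 : x ⬝ᵥ x ≤ (z ⬝ᵥ (σ *ᵥ z) * (1+2*N)) * (1+2*N) :=
      le_trans h5 (mul_le_mul_of_nonneg_right h4 (le_of_lt hc0))
    have h7 : (1/(1+2*N))^2 * (x ⬝ᵥ x)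
        ≤ (1/(1+2*N))^2 * ((z ⬝ᵥ (σ *ᵥ z) * (1+2*N)) * (1+2*N)) :=
      mul_le_mul_of_nonneg_left h6 (by positivity)
    calc (1/(1+2*N))^2 * (x ⬝ᵥ x)
        ≤ (1/(1+2*N))^2 * ((z ⬝ᵥ (σ *ᵥ z) * (1+2*N)) * (1+2*N)) := h7
      _ = z ⬝ᵥ (σ *ᵥ z) := by field_simp
  -- spectrum bound
  have hlow : ∀ μ ∈ spectrum ℝ M, (1/(1+2*N))^2 ≤ μ := by
    intro μ hμ
    rw [spectrum.mem_iff] at hμ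
    have hdet : (algebraMap ℝ (Matrix (Fin (2*2)) (Fin (2*2)) ℝ) μ - M).det = 0 := by
      by_contra h
      exact hμ ((Matrix.isUnit_iff_isUnit_det _).mpr (isUnit_iff_ne_zero.mpr h))
    obtain ⟨u, hu0, hu⟩ := Matrix.exists_mulVec_eq_zero_iff.mpr hdet
    have hMu : M *ᵥ u = μ • u := by
      rw [Algebra.algebraMap_eq_smul_one, Matrix.sub_mulVec, Matrix.smul_mulVec,
        Matrix.one_mulVec, sub_eq_zero] at hu
      exact hu.symm
    have hq := hMquad u
    rw [hMu, dotProduct_smul, smul_eq_mul] at hq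
    have hupos : 0 < u ⬝ᵥ u := by
      rcases lt_or_eq_of_le (dot_self_nonneg u) with h | h
      · exact h
      · exact absurd (dotProduct_self_eq_zero.mp h.symm) hu0
    exact le_of_mul_le_mul_right hq hupos
  have hnonempty : (spectrum ℝ M).Nonempty :=
    ⟨hMps.1.eigenvalues 0, hMps.1.eigenvalues_mem_spectrum_real 0⟩
  have hnusq : (1/(1+2*N))^2 ≤ nuSq 2 1 σ := by
    have he : nuSq 2 1 σ = sInf (spectrum ℝ M) := by rw [hM, hs]; rfl
    rw [he]
    exact le_csInf hnonempty hlow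
  have hnu : 1 / (1 + 2*N) ≤ nuMin 2 1 σ := by
    have h := Real.sqrt_le_sqrt hnusq
    rwa [Real.sqrt_sq (div_nonneg zero_le_one (le_of_lt hc0))] at h
  refine ⟨hnu, ?_⟩
  have hνpos : 0 < nuMin 2 1 σ := lt_of_lt_of_le (div_pos one_pos hc0) hnu
  rw [logNeg]
  apply max_le
  · exact Real.logb_nonneg one_lt_two hc1
  · rw [← Real.logb_inv]
    have hinv : (nuMin 2 1 σ)⁻¹ ≤ 1 + 2*N := by
      rw [← one_div, div_le_iff₀ hνpos]
      calc (1:ℝ) = (1+2*N) * (1/(1+2*N)) := by field_simp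
        _ ≤ (1+2*N) * nuMin 2 1 σ := mul_le_mul_of_nonneg_left hnu (le_of_lt hc0)
    exact (Real.logb_le_logb one_lt_two (inv_pos.mpr hνpos) hc0).mpr hinv
end

section
/- (Parametric system, free steady state and its entanglement.) Fix N ≥ 0 and 0 ≤ χ < 1/2, and set M = [[0, σz],[σz, 0]], A = −(1/2)𝟙₄ + χM, and D = (1+2N)𝟙₄. Then the matrix σ₀ = ((1+2N)/(1−4χ²)) · [[𝟙₂, 2χσz],[2χσz, 𝟙₂]] is the unique solution of the Lyapunov equation Aσ + σAᵀ + D = 0; it is a valid covariance matrix (σ₀ + iΩ ≥ 0), and its smallest partially transposed symplectic eigenvalue for the 1 vs 1 bipartition equals (1+2N)/(1+2χ), so that its logarithmic negativity is E_N(σ₀) = max(0, log₂(1+2χ) − log₂(1+2N)). -/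
open Matrix
open scoped ComplexOrder

private lemma quadAux (p q ur ui vr vi : ℝ) (hp : 0 < p) (hpq : 1 ≤ p*q) :
    0 ≤ p*(ur^2+ui^2) + q*(vr^2+vi^2) - 2*(ur*vi - ui*vr) := by
  nlinarith [sq_nonneg (p*ur - vi), sq_nonneg (p*ui + vr), sq_nonneg vi, sq_nonneg vr,
    mul_pos hp hp]

set_option maxHeartbeats 1000000 in
private lemma det4aux (m e : ℝ) :
    (!![m,0,-e,0; 0,m,0,e; -e,0,m,0; 0,e,0,m] : Matrix (Fin (2*2)) (Fin (2*2)) ℝ).det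
      = (m^2 - e^2)^2 := by
  simp [Matrix.det_succ_row_zero, Fin.sum_univ_succ, Fin.succAbove, Matrix.vecHead,
    Matrix.vecTail]
  ring

private lemma msqrt_mul_self' {d : ℕ} (M : Matrix (Fin d) (Fin d) ℝ) (h : M.PosSemidef) :
    msqrt M * msqrt M = M := by
  rw [msqrt, dif_pos h]
  have hU := Unitary.coe_star_mul_self h.1.eigenvectorUnitary
  conv_rhs => rw [h.1.spectral_theorem, Unitary.conjStarAlgAut_apply]
  simp only [mul_assoc]
  rw [← mul_assoc (star _ : Matrix (Fin d) (Fin d) ℝ), hU, one_mul, ← mul_assoc (diagonal _), diagonal_mul_diagonal]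
  congr 3
  funext i
  simp [Real.mul_self_sqrt (h.eigenvalues_nonneg i)]

set_option maxHeartbeats 2000000 in
/-- **Parametric system, free steady state and its entanglement.** For
`A = −(1/2)𝟙₄ + χM`, `D = (1+2N)𝟙₄` with `0 ≤ χ < 1/2`, the matrix
`σ₀ = ((1+2N)/(1−4χ²))[[𝟙₂, 2χσz],[2χσz, 𝟙₂]]` is the unique solution of
`Aσ + σAᵀ + D = 0`; it is a valid covariance matrix, with smallest partially transposed
symplectic eigenvalue `(1+2N)/(1+2χ)` for the 1 vs 1 bipartition, so that
`E_N(σ₀) = max (0, log₂(1+2χ) − log₂(1+2N))`. -/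
theorem parametric_system_free_steady_state (N χ : ℝ) (hN : 0 ≤ N)
    (hχ0 : 0 ≤ χ) (hχ : χ < 1/2)
    (M A D σ₀ : Matrix (Fin (2*2)) (Fin (2*2)) ℝ)
    (hM : M = !![0,0,1,0; 0,0,0,-1; 1,0,0,0; 0,-1,0,0])
    (hA : A = (-(1/2) : ℝ) • 1 + χ • M) (hD : D = (1 + 2*N) • 1)
    (hσ₀ : σ₀ = ((1+2*N)/(1-4*χ^2)) •
      !![1, 0, 2*χ, 0; 0, 1, 0, -(2*χ); 2*χ, 0, 1, 0; 0, -(2*χ), 0, 1]) :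
    A * σ₀ + σ₀ * Aᵀ + D = 0 ∧
    (∀ σ : Matrix (Fin (2*2)) (Fin (2*2)) ℝ, A * σ + σ * Aᵀ + D = 0 → σ = σ₀) ∧
    IsCM 2 σ₀ ∧ nuMin 2 1 σ₀ = (1+2*N)/(1+2*χ) ∧
    logNeg 2 1 σ₀ = max 0 (Real.logb 2 (1+2*χ) - Real.logb 2 (1+2*N)) := by
  have hden : (0:ℝ) < 1 - 4*χ^2 := by nlinarith
  have ht : (0:ℝ) < 1 + 2*N := by linarith
  set c : ℝ := (1+2*N)/(1-4*χ^2) with hc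
  have hcpos : 0 < c := div_pos ht hden
  have h2ne : (1+2*χ) ≠ 0 := by positivity
  have h3ne : (1-2*χ) ≠ 0 := by nlinarith
  have hM2 : M * M = 1 := by
    rw [hM]
    ext i j
    fin_cases i <;> fin_cases j <;>
      simp [Matrix.mul_apply, Fin.sum_univ_four, Matrix.one_apply, Matrix.vecHead, Matrix.vecTail]
  have hMT : Mᵀ = M := by
    rw [hM]
    ext i j
    fin_cases i <;> fin_cases j <;>
      simp [Matrix.transpose_apply, Matrix.vecHead, Matrix.vecTail]
  have hAT : Aᵀ = A := by
    rw [hA, Matrix.transpose_add, Matrix.transpose_smul, Matrix.transpose_smul,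
      Matrix.transpose_one, hMT]
  have hS : σ₀ = c • ((1 : Matrix (Fin (2*2)) (Fin (2*2)) ℝ) + (2*χ) • M) := by
    rw [hσ₀, hM]
    congr 1
    ext i j
    fin_cases i <;> fin_cases j <;> simp [Matrix.one_apply, Matrix.vecHead, Matrix.vecTail]
  -- Conjunct 1 : the Lyapunov equation holds
  have c1 : A * σ₀ + σ₀ * Aᵀ + D = 0 := by
    rw [hAT, hA, hS, hD]
    simp only [add_mul, mul_add, smul_mul_assoc, mul_smul_comm, smul_smul, one_mul, mul_one,
      smul_add, hM2]
    rw [hc]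
    match_scalars <;> field_simp <;> ring
  -- Conjunct 2 : uniqueness
  have c2 : ∀ σ : Matrix (Fin (2*2)) (Fin (2*2)) ℝ, A * σ + σ * Aᵀ + D = 0 → σ = σ₀ := by
    intro σ hσ
    have c1' : A * σ₀ + σ₀ * A + D = 0 := by have h := c1; rwa [hAT] at h
    have hσ' : A * σ + σ * A + D = 0 := by have h := hσ; rwa [hAT] at h
    have hδ : A * (σ - σ₀) + (σ - σ₀) * A = 0 := by
      have h : A * (σ - σ₀) + (σ - σ₀) * A = (A * σ + σ * A + D) - (A * σ₀ + σ₀ * A + D) := by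
        simp only [mul_sub, sub_mul]; abel
      rw [h, hσ', c1', sub_zero]
    set δ := σ - σ₀ with hδdef
    rw [hA] at hδ
    have e1 : δ = χ • (M * δ + δ * M) := by
      have h3 : ((-(1/2):ℝ) • δ + χ • (M * δ)) + ((-(1/2):ℝ) • δ + χ • (δ * M)) = 0 := by
        simpa [add_mul, mul_add, smul_mul_assoc, mul_smul_comm, one_mul, mul_one] using hδ
      calc δ = δ + (((-(1/2):ℝ) • δ + χ • (M * δ)) + ((-(1/2):ℝ) • δ + χ • (δ * M))) := by
            rw [h3, add_zero]
        _ = χ • (M * δ + δ * M) := by module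
    have hMM : ∀ X : Matrix (Fin (2*2)) (Fin (2*2)) ℝ, M * (M * X) = X := fun X => by
      rw [← mul_assoc, hM2, one_mul]
    have hXMM : ∀ X : Matrix (Fin (2*2)) (Fin (2*2)) ℝ, X * M * M = X := fun X => by
      rw [mul_assoc, hM2, mul_one]
    have e2 : M * δ * M = δ := by
      calc M * δ * M = M * (χ • (M * δ + δ * M)) * M := by rw [← e1]
        _ = χ • (M * (M * δ) * M + M * (δ * M) * M) := by
            simp only [Matrix.mul_smul, Matrix.smul_mul, mul_add, add_mul]
        _ = χ • (δ * M + M * δ) := by simp only [mul_assoc, hMM, hM2, mul_one]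
        _ = δ := by rw [add_comm]; exact e1.symm
    have e3 : M * δ = (2*χ) • δ := by
      calc M * δ = M * (χ • (M * δ + δ * M)) := by rw [← e1]
        _ = χ • (M * (M * δ) + M * (δ * M)) := by rw [Matrix.mul_smul, mul_add]
        _ = χ • (δ + δ) := by rw [hMM, ← mul_assoc, e2]
        _ = (2*χ) • δ := by module
    have e4 : δ * M = (2*χ) • δ := by
      calc δ * M = (χ • (M * δ + δ * M)) * M := by rw [← e1]
        _ = χ • (M * δ * M + δ * M * M) := by rw [Matrix.smul_mul, add_mul]
        _ = χ • (δ + δ) := by rw [e2, hXMM]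
        _ = (2*χ) • δ := by module
    have e5 : δ = (4*χ^2) • δ := by
      calc δ = χ • (M * δ + δ * M) := e1
        _ = χ • ((2*χ) • δ + (2*χ) • δ) := by rw [e3, e4]
        _ = (4*χ^2) • δ := by module
    have e6 : ((1:ℝ) - 4*χ^2) • δ = 0 := by
      rw [sub_smul, one_smul, ← e5, sub_self]
    exact sub_eq_zero.mp ((smul_eq_zero.mp e6).resolve_left (ne_of_gt hden))
  -- Conjunct 3 : valid covariance matrix
  have c3 : IsCM 2 σ₀ := by
    constructor
    · rw [Matrix.IsSymm, hσ₀, Matrix.transpose_smul]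
      congr 1
      ext i j
      fin_cases i <;> fin_cases j <;>
        simp [Matrix.transpose_apply, Matrix.vecHead, Matrix.vecTail]
    · have hΩ : Omega 2 = !![0,1,0,0; -1,0,0,0; 0,0,0,1; 0,0,-1,0] := by
        ext i j
        fin_cases i <;> fin_cases j <;>
          simp [Omega, Matrix.vecHead, Matrix.vecTail,
            show ((2 : Fin (2*2)) : ℕ) = 2 from rfl, show ((3 : Fin (2*2)) : ℕ) = 3 from rfl]
      have hX : σ₀.map (Complex.ofReal ·) + Complex.I • (Omega 2).map (Complex.ofReal ·) =
          !![(c:ℂ), Complex.I, (c*(2*χ) : ℝ), 0;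
             -Complex.I, (c:ℂ), 0, (-(c*(2*χ)) : ℝ);
             ((c*(2*χ) : ℝ)), 0, (c:ℂ), Complex.I;
             0, (-(c*(2*χ)) : ℝ), -Complex.I, (c:ℂ)] := by
        rw [hσ₀, hΩ]
        ext i j
        fin_cases i <;> fin_cases j <;>
          simp [Matrix.map_apply, Matrix.vecHead, Matrix.vecTail]
      rw [hX, Matrix.posSemidef_iff_dotProduct_mulVec]
      constructor
      · ext i j
        fin_cases i <;> fin_cases j <;>
          simp [Matrix.conjTranspose_apply, Matrix.vecHead, Matrix.vecTail, Complex.ext_iff]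
      · intro x
        rw [Complex.le_def]
        constructor
        · simp [dotProduct, Matrix.mulVec, Fin.sum_univ_four, Matrix.vecHead, Matrix.vecTail,
            Complex.add_re, Complex.mul_re, Complex.add_im, Complex.mul_im]
          have hpq : 1 ≤ (c*(1+2*χ)) * (c*(1-2*χ)) := by
            have he : (c*(1+2*χ)) * (c*(1-2*χ)) = (1+2*N)^2 / (1-4*χ^2) := by
              rw [hc]; field_simp; ring
            rw [he, le_div_iff₀ hden]; nlinarith
          have hp1 : 0 < c*(1+2*χ) := mul_pos hcpos (by linarith)
          have hp2 : 0 < c*(1-2*χ) := mul_pos hcpos (by linarith)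
          have hb1 := quadAux (c*(1+2*χ)) (c*(1-2*χ)) ((x 0).re+(x 2).re) ((x 0).im+(x 2).im)
            ((x 1).re+(x 3).re) ((x 1).im+(x 3).im) hp1 hpq
          have hb2 := quadAux (c*(1-2*χ)) (c*(1+2*χ)) ((x 0).re-(x 2).re) ((x 0).im-(x 2).im)
            ((x 1).re-(x 3).re) ((x 1).im-(x 3).im) hp2 (by rw [mul_comm] at hpq; exact hpq)
          nlinarith [hb1, hb2]
        · simp [dotProduct, Matrix.mulVec, Fin.sum_univ_four, Matrix.vecHead, Matrix.vecTail,
            Complex.add_im, Complex.mul_im, Complex.add_re, Complex.mul_re]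
          ring
  -- Conjunct 4 : smallest partially transposed symplectic eigenvalue
  have hPSD : σ₀.PosSemidef := by
    refine Matrix.PosSemidef.of_dotProduct_mulVec_nonneg ?_ ?_
    · rw [hσ₀]
      ext i j
      fin_cases i <;> fin_cases j <;>
        simp [Matrix.conjTranspose_apply, Matrix.vecHead, Matrix.vecTail]
    · intro x
      rw [hσ₀]
      simp [dotProduct, Matrix.mulVec, Fin.sum_univ_four, Matrix.smul_apply,
        Matrix.vecHead, Matrix.vecTail]
      have h1 : 0 ≤ c * (1 - 2*χ) := by nlinarith [hcpos]
      have h2 : 0 ≤ c * (2*χ) := by positivity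
      nlinarith [mul_nonneg h1 (sq_nonneg (x 0)), mul_nonneg h1 (sq_nonneg (x 1)),
        mul_nonneg h1 (sq_nonneg (x 2)), mul_nonneg h1 (sq_nonneg (x 3)),
        mul_nonneg h2 (sq_nonneg (x 0 + x 2)), mul_nonneg h2 (sq_nonneg (x 1 - x 3))]
  have hmsqrt : msqrt σ₀ * msqrt σ₀ = σ₀ := msqrt_mul_self' σ₀ hPSD
  have hOm : OmegaPT 2 1 = !![0,1,0,0; -1,0,0,0; 0,0,0,-1; 0,0,1,0] := by
    ext i j
    fin_cases i <;> fin_cases j <;>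
      simp [OmegaPT, Tmat, Omega, Matrix.mul_apply, Fin.sum_univ_four, Matrix.diagonal,
        Matrix.vecHead, Matrix.vecTail,
        show ((2 : Fin (2*2)) : ℕ) = 2 from rfl, show ((3 : Fin (2*2)) : ℕ) = 3 from rfl]
  have hOmT : (OmegaPT 2 1)ᵀ = !![0,-1,0,0; 1,0,0,0; 0,0,0,1; 0,0,-1,0] := by
    rw [hOm]
    ext i j
    fin_cases i <;> fin_cases j <;>
      simp [Matrix.transpose_apply, Matrix.vecHead, Matrix.vecTail]
  have P1 : (!![0,-1,0,0; 1,0,0,0; 0,0,0,1; 0,0,-1,0] : Matrix (Fin (2*2)) (Fin (2*2)) ℝ) *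
      !![0,1,0,0; -1,0,0,0; 0,0,0,-1; 0,0,1,0] = 1 := by
    ext i j
    fin_cases i <;> fin_cases j <;>
      simp [Matrix.mul_apply, Fin.sum_univ_four, Matrix.one_apply, Matrix.vecHead, Matrix.vecTail]
  have P2 : (!![0,-1,0,0; 1,0,0,0; 0,0,0,1; 0,0,-1,0] : Matrix (Fin (2*2)) (Fin (2*2)) ℝ) *
      M * !![0,1,0,0; -1,0,0,0; 0,0,0,-1; 0,0,1,0] = M := by
    rw [hM]
    ext i j
    fin_cases i <;> fin_cases j <;>
      simp [Matrix.mul_apply, Fin.sum_univ_four, Matrix.vecHead, Matrix.vecTail]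
  have hfix : (OmegaPT 2 1)ᵀ * σ₀ * OmegaPT 2 1 = σ₀ := by
    rw [hOmT, hOm, hS]
    simp only [Matrix.mul_smul, Matrix.smul_mul, mul_add, add_mul, mul_one, one_mul, smul_add]
    rw [P1, P2]
  have hq := hmsqrt
  have key : ∀ s : Matrix (Fin (2*2)) (Fin (2*2)) ℝ, s * s = σ₀ → s * σ₀ * s = σ₀ * σ₀ := by
    intro s hs
    rw [← hs]
    simp only [mul_assoc]
  have hW : msqrt σ₀ * (OmegaPT 2 1)ᵀ * σ₀ * OmegaPT 2 1 * msqrt σ₀ = σ₀ * σ₀ := by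
    calc msqrt σ₀ * (OmegaPT 2 1)ᵀ * σ₀ * OmegaPT 2 1 * msqrt σ₀
        = msqrt σ₀ * ((OmegaPT 2 1)ᵀ * σ₀ * OmegaPT 2 1) * msqrt σ₀ := by
          simp only [mul_assoc]
      _ = msqrt σ₀ * σ₀ * msqrt σ₀ := by rw [hfix]
      _ = σ₀ * σ₀ := key _ hq
  have hσ₀sq : σ₀ * σ₀ = (c^2*(1+4*χ^2)) • (1 : Matrix (Fin (2*2)) (Fin (2*2)) ℝ)
      + (c^2*(4*χ)) • M := by
    rw [hS]
    simp only [Matrix.smul_mul, Matrix.mul_smul, add_mul, mul_add, one_mul, mul_one,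
      smul_add, smul_smul, hM2]
    match_scalars <;> ring
  have hde1 : c^2*(1+4*χ^2) - c^2*(4*χ) = ((1+2*N)/(1+2*χ))^2 := by
    rw [hc]; field_simp; ring
  have hde2 : c^2*(1+4*χ^2) + c^2*(4*χ) = ((1+2*N)/(1-2*χ))^2 := by
    rw [hc]; field_simp; ring
  have hdet : ∀ μ : ℝ, (algebraMap ℝ (Matrix (Fin (2*2)) (Fin (2*2)) ℝ) μ - σ₀*σ₀).det
      = (μ - ((1+2*N)/(1+2*χ))^2)^2 * (μ - ((1+2*N)/(1-2*χ))^2)^2 := by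
    intro μ
    have hE : algebraMap ℝ (Matrix (Fin (2*2)) (Fin (2*2)) ℝ) μ - σ₀*σ₀ =
        !![μ - c^2*(1+4*χ^2), 0, -(c^2*(4*χ)), 0;
           0, μ - c^2*(1+4*χ^2), 0, c^2*(4*χ);
           -(c^2*(4*χ)), 0, μ - c^2*(1+4*χ^2), 0;
           0, c^2*(4*χ), 0, μ - c^2*(1+4*χ^2)] := by
      rw [hσ₀sq, hM, Matrix.algebraMap_eq_diagonal]
      ext i j
      fin_cases i <;> fin_cases j <;>
        simp [Matrix.diagonal, Matrix.one_apply, Matrix.vecHead, Matrix.vecTail] <;> ring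
    rw [hE, det4aux]
    have hfac : (μ - c^2*(1+4*χ^2))^2 - (c^2*(4*χ))^2
        = (μ - ((1+2*N)/(1+2*χ))^2) * (μ - ((1+2*N)/(1-2*χ))^2) := by
      rw [← hde1, ← hde2]; ring
    rw [hfac, mul_pow]
  have hspec : spectrum ℝ (σ₀ * σ₀) =
      {((1+2*N)/(1+2*χ))^2, ((1+2*N)/(1-2*χ))^2} := by
    ext μ
    rw [spectrum.mem_iff, Matrix.isUnit_iff_isUnit_det, isUnit_iff_ne_zero, not_not, hdet μ,
      Set.mem_insert_iff, Set.mem_singleton_iff, mul_eq_zero,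
      pow_eq_zero_iff (two_ne_zero (α := ℕ)), pow_eq_zero_iff (two_ne_zero (α := ℕ)),
      sub_eq_zero, sub_eq_zero]
  have hle : ((1+2*N)/(1+2*χ))^2 ≤ ((1+2*N)/(1-2*χ))^2 := by
    have h1 : (1+2*N)/(1+2*χ) ≤ (1+2*N)/(1-2*χ) := by
      rw [div_le_div_iff₀ (by linarith) (by linarith)]
      nlinarith
    have h2 : 0 ≤ (1+2*N)/(1+2*χ) := by positivity
    nlinarith
  have hnusq : nuSq 2 1 σ₀ = ((1+2*N)/(1+2*χ))^2 := by
    rw [nuSq, hW, hspec, csInf_pair, inf_eq_left.mpr hle]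
  have c4 : nuMin 2 1 σ₀ = (1+2*N)/(1+2*χ) := by
    rw [nuMin, hnusq, Real.sqrt_sq (by positivity)]
  -- Conjunct 5 : logarithmic negativity
  have c5 : logNeg 2 1 σ₀ = max 0 (Real.logb 2 (1+2*χ) - Real.logb 2 (1+2*N)) := by
    rw [logNeg, c4, Real.logb_div (by positivity) h2ne, neg_sub]
  exact ⟨c1, c2, c3, c4, c5⟩
end
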